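/- arXiv:1510.07753 — 6 statements merged into one kernel-verified Lean document; each statement's English description precedes it below -/
import Mathlib

section
/- Let l, k, m be positive integers with k ≤ l, and let s₁,…,s_m be distinct nonzero complex numbers. For a = 0,…,k−1 and s ∈ ℂ define the vector v_a(s) ∈ ℂ^{km} whose j-th entry (j = 0,…,km−1) is the binomial coefficient C(l+j, a) times s^{l+j}. Then the km vectors {v_a(s_i) : a = 0,…,k−1, i = 1,…,m} are linearly independent in ℂ^{km}. -/
open Polynomial Finset

/-- `P ↦ (derivative^[a] P).eval r` as a linear map. -/
noncomputable def stmt1.Dv (a : ℕ) (r : ℂ) : Polynomial ℂ →ₗ[ℂ] ℂ :=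
  Polynomial.leval r ∘ₗ ((Polynomial.derivative : Polynomial ℂ →ₗ[ℂ] Polynomial ℂ) ^ a)

lemma stmt1.Dv_apply (a : ℕ) (r : ℂ) (P : Polynomial ℂ) :
    stmt1.Dv a r P = (Polynomial.derivative^[a] P).eval r := by
  simp [stmt1.Dv, Module.End.pow_apply]

lemma stmt1.evalA {r : ℂ} {n b : ℕ} (hb : b < n) (Q : Polynomial ℂ) :
    (Polynomial.derivative^[b] ((X - C r) ^ n * Q)).eval r = 0 := by
  rw [Polynomial.iterate_derivative_mul, Polynomial.eval_finset_sum]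
  refine Finset.sum_eq_zero fun j hj => ?_
  rw [Polynomial.iterate_derivative_X_sub_pow]
  have h : n - (b - j) ≠ 0 := by omega
  simp [smul_mul_assoc, Polynomial.eval_smul, Polynomial.eval_mul, Polynomial.eval_pow,
    zero_pow h]

lemma stmt1.evalB (r : ℂ) (a : ℕ) (Q : Polynomial ℂ) :
    (Polynomial.derivative^[a] ((X - C r) ^ a * Q)).eval r =
      (a.factorial : ℂ) * Q.eval r := by
  rw [Polynomial.iterate_derivative_mul, Polynomial.eval_finset_sum]
  rw [Finset.sum_eq_single 0]
  · simp [Polynomial.iterate_derivative_X_sub_pow_self]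
  · intro j hj hj0
    rw [Polynomial.iterate_derivative_X_sub_pow]
    have h : a - (a - j) ≠ 0 := by simp at hj; omega
    simp [smul_mul_assoc, Polynomial.eval_smul, Polynomial.eval_mul, Polynomial.eval_pow,
      zero_pow h]
  · simp

/-- For `k ≤ l` and distinct nonzero `s₁,…,s_m ∈ ℂ`, the vectors
`v_a(s_i) ∈ ℂ^{km}` with entries `(v_a(s))_j = C(l+j, a)·s^{l+j}` (for
`a = 0,…,k−1`, `j = 0,…,km−1`) are linearly independent. -/
theorem stmt1 (l k m : ℕ) (hl : 0 < l) (hk : 0 < k) (hm : 0 < m) (hkl : k ≤ l)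
    (s : Fin m → ℂ) (hs_inj : Function.Injective s) (hs_ne : ∀ i, s i ≠ 0) :
    LinearIndependent ℂ (fun p : Fin k × Fin m =>
      (fun j : Fin (k * m) =>
        ((Nat.choose (l + (j : ℕ)) (p.1 : ℕ) : ℂ)) * s p.2 ^ (l + (j : ℕ)) :
        Fin (k * m) → ℂ)) := by
  rw [Fintype.linearIndependent_iff]
  intro g hg
  -- the vanishing of the combination at each coordinate
  have hS : ∀ n, n < k * m →
      ∑ p : Fin k × Fin m,
        g p * ((Nat.choose (l + n) (p.1 : ℕ) : ℂ) * s p.2 ^ (l + n)) = 0 := by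
    intro n hn
    have h := congrFun hg ⟨n, hn⟩
    simpa [Finset.sum_apply] using h
  -- The linear functional
  set LgM : Polynomial ℂ →ₗ[ℂ] ℂ :=
    ∑ p : Fin k × Fin m,
      (g p * s p.2 ^ (p.1 : ℕ) / ((p.1 : ℕ).factorial : ℂ)) • stmt1.Dv (p.1 : ℕ) (s p.2)
    with hLgM
  have hfacne : ∀ a : ℕ, ((a.factorial : ℂ)) ≠ 0 :=
    fun a => Nat.cast_ne_zero.mpr (Nat.factorial_ne_zero a)
  -- value of LgM on monomials X^(l+n)
  have hLmono : ∀ n : ℕ,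
      LgM (X ^ (l + n)) =
        ∑ p : Fin k × Fin m,
          g p * ((Nat.choose (l + n) (p.1 : ℕ) : ℂ) * s p.2 ^ (l + n)) := by
    intro n
    rw [hLgM, LinearMap.sum_apply]
    refine Finset.sum_congr rfl fun p _ => ?_
    rw [LinearMap.smul_apply, smul_eq_mul, stmt1.Dv_apply,
      Polynomial.iterate_derivative_X_pow_eq_natCast_mul,
      Polynomial.eval_mul, Polynomial.eval_natCast, Polynomial.eval_pow, Polynomial.eval_X,
      Nat.descFactorial_eq_factorial_mul_choose]
    have ha : (p.1 : ℕ) ≤ l + n := le_trans (le_of_lt p.1.is_lt) (le_trans hkl (Nat.le_add_right _ _))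
    have hpow : s p.2 ^ (p.1 : ℕ) * s p.2 ^ (l + n - (p.1 : ℕ)) = s p.2 ^ (l + n) := by
      rw [← pow_add]; congr 1; omega
    rw [← hpow]
    push_cast
    rw [div_mul_eq_mul_div, div_eq_iff (hfacne _)]
    ring
  -- the key downward induction
  have key : ∀ (n : ℕ) (a₀ : Fin k) (i₀ : Fin m), k - (a₀ : ℕ) ≤ n → g (a₀, i₀) = 0 := by
    intro n
    induction n with
    | zero => intro a₀ i₀ h; exact absurd h (by have := a₀.is_lt; omega)
    | succ n IH =>
      intro a₀ i₀ hn
      set e : Fin m → ℕ := fun i => if i = i₀ then (a₀ : ℕ) else k with he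
      set q : Polynomial ℂ := ∏ i, (X - C (s i)) ^ e i with hq
      set P : Polynomial ℂ := X ^ l * q with hP
      -- degree bound
      have hqdeg : q.natDegree < k * m := by
        have h1 : q.natDegree = ∑ i, e i := by
          rw [hq, Polynomial.natDegree_prod]
          · exact Finset.sum_congr rfl fun i _ => by
              rw [Polynomial.natDegree_pow, Polynomial.natDegree_X_sub_C, mul_one]
          · intro i _; exact pow_ne_zero _ (Polynomial.X_sub_C_ne_zero _)
        have h2 : ∑ i, e i = (a₀ : ℕ) + ∑ i ∈ Finset.univ.erase i₀, e i := by
          rw [← Finset.add_sum_erase _ _ (Finset.mem_univ i₀)]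
          simp [he]
        have h3 : ∑ i ∈ Finset.univ.erase i₀, e i = (m - 1) * k := by
          rw [Finset.sum_congr rfl (fun i hi => show e i = k by
            simp [he, (Finset.mem_erase.mp hi).1]), Finset.sum_const, smul_eq_mul]
          congr 1
          rw [Finset.card_erase_of_mem (Finset.mem_univ _), Finset.card_univ, Fintype.card_fin]
        have ha := a₀.is_lt
        have hm1 : (m - 1) * k + k = m * k := by
          cases m with
          | zero => omega
          | succ m' => simp [Nat.succ_sub_one, Nat.succ_mul]
        calc q.natDegree = (a₀ : ℕ) + (m - 1) * k := by rw [h1, h2, h3]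
          _ < k + (m - 1) * k := by omega
          _ = k * m := by rw [add_comm, hm1, Nat.mul_comm]
      -- P as a combination of the monomials X^(l+j)
      have hPsum : P = ∑ j ∈ Finset.range (k * m), q.coeff j • X ^ (l + j) := by
        conv_lhs => rw [hP, q.as_sum_range' (k * m) hqdeg]
        rw [Finset.mul_sum]
        refine Finset.sum_congr rfl fun j _ => ?_
        rw [← Polynomial.smul_X_eq_monomial, pow_add, mul_smul_comm]
      have h0 : LgM P = 0 := by
        rw [hPsum, map_sum]
        refine Finset.sum_eq_zero fun j hj => ?_
        rw [map_smul, smul_eq_mul, hLmono, hS j (Finset.mem_range.mp hj), mul_zero]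
      -- generic factorization of P
      have hfacgen : ∀ i : Fin m,
          P = (X - C (s i)) ^ (e i) *
            (X ^ l * ∏ i' ∈ Finset.univ.erase i, (X - C (s i')) ^ e i') := by
        intro i
        rw [hP, hq, ← Finset.mul_prod_erase _ _ (Finset.mem_univ i)]
        ring
      set R : Polynomial ℂ := X ^ l * ∏ i ∈ Finset.univ.erase i₀, (X - C (s i)) ^ k with hR
      have hfac0 : P = (X - C (s i₀)) ^ (a₀ : ℕ) * R := by
        rw [hfacgen i₀, hR]
        congr 2
        · simp [he]
        · exact Finset.prod_congr rfl fun i hi => by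
            simp [he, (Finset.mem_erase.mp hi).1]
      have hRe : R.eval (s i₀) ≠ 0 := by
        rw [hR, Polynomial.eval_mul, Polynomial.eval_pow, Polynomial.eval_X,
          Polynomial.eval_prod]
        refine mul_ne_zero (pow_ne_zero _ (hs_ne i₀)) (Finset.prod_ne_zero_iff.mpr ?_)
        intro i hi
        simp only [Polynomial.eval_pow, Polynomial.eval_sub, Polynomial.eval_X,
          Polynomial.eval_C]
        exact pow_ne_zero _ (sub_ne_zero.mpr fun h => (Finset.mem_erase.mp hi).1 (hs_inj h.symm))
      -- compute LgM P directly
      have h1 : LgM P = g (a₀, i₀) * s i₀ ^ (a₀ : ℕ) / ((a₀ : ℕ).factorial : ℂ) *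
          (((a₀ : ℕ).factorial : ℂ) * R.eval (s i₀)) := by
        rw [hLgM, LinearMap.sum_apply]
        rw [Finset.sum_eq_single (a₀, i₀)]
        · rw [LinearMap.smul_apply, smul_eq_mul, stmt1.Dv_apply, hfac0, stmt1.evalB]
        · rintro ⟨a, i⟩ _ hne
          rw [LinearMap.smul_apply, smul_eq_mul]
          by_cases hi : i = i₀
          · subst hi
            by_cases hlt : (a : ℕ) < (a₀ : ℕ)
            · rw [stmt1.Dv_apply, hfac0, stmt1.evalA hlt, mul_zero]
            · have hane : a ≠ a₀ := fun h => hne (by rw [h])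
              have hgt : (a₀ : ℕ) < (a : ℕ) := by
                have := Fin.val_ne_of_ne hane
                omega
              have hg0 : g (a, i) = 0 := IH a i (by omega)
              rw [hg0]
              ring
          · have hfaci : P = (X - C (s i)) ^ k *
                (X ^ l * ∏ i' ∈ Finset.univ.erase i, (X - C (s i')) ^ e i') := by
              have := hfacgen i
              rwa [show e i = k by simp [he, hi]] at this
            rw [stmt1.Dv_apply, hfaci, stmt1.evalA a.is_lt, mul_zero]
        · intro h; exact absurd (Finset.mem_univ _) h
      -- conclude
      have h2 := h1.symm.trans h0
      replace h2 : g (a₀, i₀) * s i₀ ^ (a₀ : ℕ) * (((a₀ : ℕ).factorial : ℂ) * R.eval (s i₀)) = 0 ∨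
          (a₀ : ℕ).factorial = 0 :=
        Or.inl (by
          have hf := hfacne (a₀ : ℕ)
          rw [← mul_zero (((a₀ : ℕ).factorial : ℂ)), ← h2]
          field_simp)
      rcases h2 with h2 | h2
      swap
      · exact absurd h2 (Nat.factorial_ne_zero _)
      rcases mul_eq_zero.mp h2 with h3 | h3
      · rcases mul_eq_zero.mp h3 with h4 | h4
        · exact h4
        · exact absurd h4 (pow_ne_zero _ (hs_ne i₀))
      · rcases mul_eq_zero.mp h3 with h4 | h4
        · exact absurd h4 (hfacne _)
        · exact absurd h4 hRe
  intro p
  exact key k p.1 p.2 (by omega)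
end

section
/- Let l, k, m be positive integers with k ≤ l, and let s₁,…,s_m be distinct nonzero complex numbers. For a = 0,…,k−1 and s ∈ ℂ define the vector w_a(s) ∈ ℂ^{km} whose j-th entry (j = 0,…,km−1) is (l+j)^a · s^{l+j}. Then the km vectors {w_a(s_i) : a = 0,…,k−1, i = 1,…,m} are linearly independent in ℂ^{km}. -/
open Polynomial

/-- The operator `P ↦ X * P'` on `ℂ[X]`, as a linear map. -/
noncomputable def thetaOp : ℂ[X] →ₗ[ℂ] ℂ[X] where
  toFun P := X * derivative P
  map_add' P Q := by simp [mul_add]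
  map_smul' c P := by
    simp only [RingHom.id_apply, smul_eq_C_mul, derivative_C_mul]
    ring

lemma thetaOp_X_pow (n : ℕ) : thetaOp (X ^ n : ℂ[X]) = (n : ℂ) • X ^ n := by
  cases n with
  | zero => simp [thetaOp]
  | succ n =>
      show (X : ℂ[X]) * derivative (X ^ (n+1)) = _
      rw [derivative_X_pow, smul_eq_C_mul]
      push_cast
      rw [pow_succ]
      ring

lemma thetaOp_pow_X_pow (a n : ℕ) :
    ((thetaOp ^ a) (X ^ n : ℂ[X])) = ((n : ℂ) ^ a) • X ^ n := by
  induction a with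
  | zero => simp
  | succ a ih =>
      rw [pow_succ, Module.End.mul_apply, thetaOp_X_pow, map_smul, ih, smul_smul, pow_succ']

lemma eval_thetaOp_pow_ne_zero {s : ℂ} (hs : s ≠ 0) :
    ∀ b (Q : ℂ[X]), Q ≠ 0 → rootMultiplicity s Q = b →
      ((thetaOp ^ b) Q).eval s ≠ 0 := by
  intro b
  induction b with
  | zero =>
      intro Q hQ hrm
      have : ¬ Q.IsRoot s := by
        intro h
        have := (rootMultiplicity_pos hQ).mpr h
        omega
      simpa [IsRoot] using this
  | succ b ih =>
      intro Q hQ hrm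
      have hroot : Q.IsRoot s := by
        have : 0 < rootMultiplicity s Q := by omega
        exact (rootMultiplicity_pos hQ).mp this
      have hD : derivative Q ≠ 0 := by
        intro h0
        have hdeg := natDegree_eq_zero_of_derivative_eq_zero h0
        have : Q = C (Q.coeff 0) := eq_C_of_natDegree_eq_zero hdeg
        rw [this] at hroot
        simp [IsRoot] at hroot
        exact hQ (by rw [this, hroot, map_zero])
      have hQ' : thetaOp Q ≠ 0 := by
        show (X : ℂ[X]) * derivative Q ≠ 0
        exact mul_ne_zero X_ne_zero hD
      have hrm' : rootMultiplicity s (thetaOp Q) = b := by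
        show rootMultiplicity s ((X : ℂ[X]) * derivative Q) = b
        rw [rootMultiplicity_mul (by exact mul_ne_zero X_ne_zero hD),
          derivative_rootMultiplicity_of_root hroot, hrm]
        have hX : rootMultiplicity s (X : ℂ[X]) = 0 :=
          rootMultiplicity_eq_zero (by simp [IsRoot, hs])
        omega
      rw [pow_succ, Module.End.mul_apply]
      exact ih (thetaOp Q) hQ' hrm'

/-- Key injectivity lemma: if `Q = Σ_j d_j X^{l+j}` is annihilated by all the
functionals `P ↦ ((X d/dX)^a P)(s i)`, `a < k`, then `d = 0`. -/
lemma key_lemma (l k m : ℕ) (hl : 0 < l) (hk : 0 < k) (hm : 0 < m)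
    (s : Fin m → ℂ) (hs_inj : Function.Injective s) (hs_ne : ∀ i, s i ≠ 0)
    (d : Fin (k * m) → ℂ)
    (h : ∀ (a : Fin k) (i : Fin m),
      ∑ j : Fin (k * m), d j * ((l + (j : ℕ) : ℕ) : ℂ) ^ (a : ℕ) * s i ^ (l + (j : ℕ)) = 0) :
    d = 0 := by
  set R : ℂ[X] := ∑ j : Fin (k * m), d j • (X : ℂ[X]) ^ (j : ℕ) with hR
  set Q : ℂ[X] := X ^ l * R with hQdef
  have hQsum : Q = ∑ j : Fin (k * m), d j • (X : ℂ[X]) ^ (l + (j : ℕ)) := by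
    rw [hQdef, hR, Finset.mul_sum]
    refine Finset.sum_congr rfl fun j _ => ?_
    rw [mul_smul_comm, ← pow_add]
  have heval : ∀ (a : ℕ) (z : ℂ),
      ((thetaOp ^ a) Q).eval z
        = ∑ j : Fin (k * m), d j * ((l + (j : ℕ) : ℕ) : ℂ) ^ a * z ^ (l + (j : ℕ)) := by
    intro a z
    rw [hQsum, map_sum]
    rw [eval_finset_sum]
    refine Finset.sum_congr rfl fun j _ => ?_
    rw [map_smul, thetaOp_pow_X_pow]
    simp [mul_assoc]
  have hRzero : R = 0 := by
    by_contra hR0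
    have hQ0 : Q ≠ 0 := mul_ne_zero (pow_ne_zero _ X_ne_zero) hR0
    -- each s i is a root of multiplicity ≥ k
    have hmult : ∀ i : Fin m, k ≤ rootMultiplicity (s i) Q := by
      intro i
      by_contra hlt
      push_neg at hlt
      set b := rootMultiplicity (s i) Q with hb
      have := eval_thetaOp_pow_ne_zero (hs_ne i) b Q hQ0 rfl
      rw [heval b (s i)] at this
      exact this (h ⟨b, hlt⟩ i)
    have hdvd : ∀ i : Fin m, (X - C (s i)) ^ k ∣ Q := fun i =>
      (le_rootMultiplicity_iff hQ0).mp (hmult i)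
    have hprod : (∏ i : Fin m, (X - C (s i)) ^ k) ∣ Q := by
      refine Finset.prod_dvd_of_coprime ?_ (fun i _ => hdvd i)
      intro i _ j _ hij
      exact ((pairwise_coprime_X_sub_C hs_inj) hij).pow
    have hcop : IsCoprime ((X : ℂ[X]) ^ l) (∏ i : Fin m, (X - C (s i)) ^ k) := by
      refine IsCoprime.pow_left ?_
      refine IsCoprime.prod_right fun i _ => ?_
      refine IsCoprime.pow_right ?_
      have : IsCoprime ((X : ℂ[X]) - C 0) (X - C (s i)) :=
        isCoprime_X_sub_C_of_isUnit_sub ((sub_ne_zero.mpr (hs_ne i).symm).isUnit)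
      simpa using this
    have hdvdR : (∏ i : Fin m, (X - C (s i)) ^ k) ∣ R :=
      (hcop.symm).dvd_of_dvd_mul_left (hQdef ▸ hprod)
    have hdegP : (∏ i : Fin m, (X - C (s i)) ^ k).natDegree = m * k := by
      rw [natDegree_prod]
      · simp [natDegree_pow]
      · intro i _
        exact pow_ne_zero _ (X_sub_C_ne_zero (s i))
    have hdegR : R.natDegree ≤ k * m - 1 := by
      rw [hR]
      refine natDegree_sum_le_of_forall_le _ _ fun j _ => ?_
      refine le_trans (natDegree_smul_le _ _) ?_
      rw [natDegree_X_pow]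
      have := j.2
      omega
    have := natDegree_le_of_dvd hdvdR hR0
    rw [hdegP] at this
    have hkm : 0 < k * m := Nat.mul_pos hk hm
    have hcomm : m * k = k * m := Nat.mul_comm m k
    omega
  funext j
  have : R.coeff (j : ℕ) = d j := by
    rw [hR, finset_sum_coeff]
    rw [Finset.sum_eq_single j]
    · simp
    · intro j' _ hne
      have : (j : ℕ) ≠ (j' : ℕ) := fun hh => hne (Fin.ext hh).symm
      simp only [coeff_smul, coeff_X_pow, if_neg this, smul_eq_mul, mul_zero]
    · intro hj
      exact absurd (Finset.mem_univ j) hj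
  rw [hRzero] at this
  simp at this
  simp [← this]

/-- For `k ≤ l` and distinct nonzero `s₁,…,s_m ∈ ℂ`, the vectors
`w_a(s_i) ∈ ℂ^{km}` with entries `(w_a(s))_j = (l+j)^a·s^{l+j}` (for
`a = 0,…,k−1`, `j = 0,…,km−1`) are linearly independent. -/
theorem stmt2 (l k m : ℕ) (hl : 0 < l) (hk : 0 < k) (hm : 0 < m) (hkl : k ≤ l)
    (s : Fin m → ℂ) (hs_inj : Function.Injective s) (hs_ne : ∀ i, s i ≠ 0) :
    LinearIndependent ℂ (fun p : Fin k × Fin m =>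
      (fun j : Fin (k * m) =>
        ((l + (j : ℕ) : ℕ) : ℂ) ^ (p.1 : ℕ) * s p.2 ^ (l + (j : ℕ)) :
        Fin (k * m) → ℂ)) := by
  set e : Fin k × Fin m ≃ Fin (k * m) := finProdFinEquiv
  set N : Matrix (Fin (k * m)) (Fin (k * m)) ℂ := fun j' j =>
    ((l + (j : ℕ) : ℕ) : ℂ) ^ (((e.symm j').1 : ℕ)) * s (e.symm j').2 ^ (l + (j : ℕ)) with hN
  have hdet : N.det ≠ 0 := by
    intro hdet0
    obtain ⟨v, hv0, hv⟩ := Matrix.exists_mulVec_eq_zero_iff.mpr hdet0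
    have : v = 0 := by
      refine key_lemma l k m hl hk hm s hs_inj hs_ne v ?_
      intro a i
      have := congrFun hv (e (a, i))
      simp only [Matrix.mulVec, dotProduct, hN, Equiv.symm_apply_apply,
        Pi.zero_apply] at this
      rw [← this]
      refine Finset.sum_congr rfl fun j _ => ?_
      ring
    exact hv0 this
  rw [Fintype.linearIndependent_iff]
  intro c hc
  have hcj : ∀ j : Fin (k * m),
      ∑ p : Fin k × Fin m,
        c p * (((l + (j : ℕ) : ℕ) : ℂ) ^ (p.1 : ℕ) * s p.2 ^ (l + (j : ℕ))) = 0 := by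
    intro j
    have := congrFun hc j
    simpa [Finset.sum_apply] using this
  have hvM : Matrix.vecMul (fun j' => c (e.symm j')) N = 0 := by
    funext j
    simp only [Matrix.vecMul, dotProduct, Pi.zero_apply]
    rw [← Equiv.sum_comp e (fun j' => c (e.symm j') * N j' j)]
    simp only [hN, Equiv.symm_apply_apply]
    exact hcj j
  have hv0 : (fun j' : Fin (k * m) => c (e.symm j')) = 0 := by
    by_contra hne
    exact hdet (Matrix.exists_vecMul_eq_zero_iff.mp ⟨_, hne, hvM⟩)
  intro p
  have := congrFun hv0 (e p)
  simpa using this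
end

section
/- Let T : M_k(ℂ) → M_k(ℂ) be a positive linear map, let v₁,…,v_n ∈ M_k(ℂ) be matrices with Σ_μ v_μ* ρ v_μ = ρ for a positive semidefinite matrix ρ (i.e., ρ is invariant for the adjoint of the CP map A ↦ Σ v_μ A v_μ*). Then for every vector ξ in the kernel of ρ, every vector η in the range of ρ, every l ∈ ℕ, and every word v_{μ₁}⋯v_{μ_l} in the matrices v_μ, one has ⟨η, v_{μ₁}⋯v_{μ_l} ξ⟩ = 0. -/
open scoped ComplexOrder Matrix

/-- If `ρ` is positive semidefinite with `Σ_μ v_μ* ρ v_μ = ρ`, then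
for every `ξ` in the kernel of `ρ`, every `η` in the range of `ρ`, and every word
`v_{μ₁}⋯v_{μ_l}`, one has `⟨η, v_{μ₁}⋯v_{μ_l} ξ⟩ = 0`. -/
theorem stmt3 (k n : ℕ) (hk : 0 < k) (hn : 0 < n)
    (v : Fin n → Matrix (Fin k) (Fin k) ℂ)
    (ρ : Matrix (Fin k) (Fin k) ℂ) (hρ : ρ.PosSemidef)
    (hinv : ∑ μ, (v μ)ᴴ * ρ * v μ = ρ) :
    ∀ ξ : Fin k → ℂ, ρ.mulVec ξ = 0 →
    ∀ η : Fin k → ℂ, (∃ ζ : Fin k → ℂ, η = ρ.mulVec ζ) →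
    ∀ (l : ℕ) (μs : Fin l → Fin n),
      dotProduct (star η) (((List.ofFn fun i => v (μs i)).prod).mulVec ξ) = 0 := by
  -- key: kernel of ρ is invariant under each v μ
  have key : ∀ ξ : Fin k → ℂ, ρ.mulVec ξ = 0 → ∀ μ, ρ.mulVec ((v μ).mulVec ξ) = 0 := by
    intro ξ hξ μ
    have hsum : ∑ ν, dotProduct (star ((v ν).mulVec ξ)) (ρ.mulVec ((v ν).mulVec ξ)) = 0 := by
      have : dotProduct (star ξ) ((∑ ν, (v ν)ᴴ * ρ * v ν).mulVec ξ) = 0 := by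
        rw [hinv, hξ, dotProduct_zero]
      have hsm : (∑ ν, (v ν)ᴴ * ρ * v ν) *ᵥ ξ = ∑ ν, ((v ν)ᴴ * ρ * v ν) *ᵥ ξ := by
        ext i
        simp only [Matrix.mulVec, dotProduct, Finset.sum_apply, Finset.sum_mul,
          Matrix.sum_apply]
        rw [Finset.sum_comm]
      rw [hsm] at this
      have hds : star ξ ⬝ᵥ ∑ ν, ((v ν)ᴴ * ρ * v ν) *ᵥ ξ
          = ∑ ν, star ξ ⬝ᵥ ((v ν)ᴴ * ρ * v ν) *ᵥ ξ := by
        simp only [dotProduct, Finset.sum_apply, Finset.mul_sum]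
        rw [Finset.sum_comm]
      rw [hds] at this
      rw [← this]
      congr 1; funext ν
      simp only [Matrix.star_mulVec, Matrix.dotProduct_mulVec, Matrix.vecMul_vecMul,
        Matrix.mul_assoc]
    have hterm : ∀ ν ∈ Finset.univ, (0 : ℂ) ≤
        dotProduct (star ((v ν).mulVec ξ)) (ρ.mulVec ((v ν).mulVec ξ)) :=
      fun ν _ => hρ.dotProduct_mulVec_nonneg _
    have := (Finset.sum_eq_zero_iff_of_nonneg hterm).mp hsum μ (Finset.mem_univ μ)
    exact (hρ.dotProduct_mulVec_zero_iff _).mp this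
  intro ξ hξ η ⟨ζ, hζ⟩ l μs
  -- the word applied to ξ stays in the kernel of ρ
  have hker : ∀ (l : ℕ) (μs : Fin l → Fin n),
      ρ.mulVec (((List.ofFn fun i => v (μs i)).prod).mulVec ξ) = 0 := by
    intro l
    induction l with
    | zero => intro μs; simpa using hξ
    | succ m ih =>
      intro μs
      have : (List.ofFn fun i : Fin (m+1) => v (μs i)).prod
          = v (μs 0) * (List.ofFn fun i : Fin m => v (μs i.succ)).prod := by
        rw [List.ofFn_succ, List.prod_cons]
      rw [this, ← Matrix.mulVec_mulVec]
      exact key _ (ih _) _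
  subst hζ
  rw [Matrix.star_mulVec, hρ.1, ← Matrix.dotProduct_mulVec, hker l μs,
    dotProduct_zero]
end

section
/- Let 𝐯 = (v₁,…,v_n) ∈ M_k(ℂ)^n and suppose there exists m₂ ∈ ℕ and an invertible matrix X ∈ 𝒦_{m₂}(𝐯) (the span of words of length m₂) such that X^{-1} 𝒦_{N+m₂}(𝐯) ⊆ 𝒦_N(𝐯) for all N ≥ m₃. Then for all N ≥ m₃, (X^{-1})* (ker Γ_N) ⊆ ker Γ_{N+m₂}, where Γ_l : M_k(ℂ) → (ℂ^n)^{⊗l} is the matrix-product map Γ_l(Y) = Σ_{μ^{(l)}} Tr(Y (v_{μ₁}⋯v_{μ_l})*) ψ_{μ₁}⊗⋯⊗ψ_{μ_l}. -/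
open scoped Matrix

/-- The word `v_{μ₁}⋯v_{μ_l}` associated to `μ ∈ {1,…,n}^l`. -/
noncomputable def mpsWord {k n : ℕ} (v : Fin n → Matrix (Fin k) (Fin k) ℂ)
    {l : ℕ} (μs : Fin l → Fin n) : Matrix (Fin k) (Fin k) ℂ :=
  (List.ofFn fun i => v (μs i)).prod

/-- `𝒦_l(𝐯)`: the span of all words of length `l`. -/
noncomputable def mpsSpan {k n : ℕ} (v : Fin n → Matrix (Fin k) (Fin k) ℂ)
    (l : ℕ) : Submodule ℂ (Matrix (Fin k) (Fin k) ℂ) :=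
  Submodule.span ℂ (Set.range fun μs : Fin l → Fin n => mpsWord v μs)

/-- The matrix-product map `Γ_l` in the coordinates of the fixed orthonormal
basis `ψ_{μ₁}⊗⋯⊗ψ_{μ_l}` of `(ℂ^n)^{⊗l}`:
`Γ_l(Y)_{μ^{(l)}} = Tr(Y (v_{μ₁}⋯v_{μ_l})*)`. -/
noncomputable def mpsGamma {k n : ℕ} (v : Fin n → Matrix (Fin k) (Fin k) ℂ)
    (l : ℕ) (Y : Matrix (Fin k) (Fin k) ℂ) : (Fin l → Fin n) → ℂ :=
  fun μs => (Y * (mpsWord v μs)ᴴ).trace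

/-- If `X ∈ 𝒦_{m₂}(𝐯)` is invertible with
`X⁻¹𝒦_{N+m₂}(𝐯) ⊆ 𝒦_N(𝐯)` for all `N ≥ m₃`, then
`(X⁻¹)* (ker Γ_N) ⊆ ker Γ_{N+m₂}` for all `N ≥ m₃`. -/
theorem stmt5 (k n m₂ m₃ : ℕ) (hk : 0 < k) (hn : 0 < n)
    (v : Fin n → Matrix (Fin k) (Fin k) ℂ)
    (X : Matrix (Fin k) (Fin k) ℂ)
    (hXmem : X ∈ mpsSpan v m₂) (hXunit : IsUnit X)
    (hXK : ∀ N, m₃ ≤ N → ∀ Z ∈ mpsSpan v (N + m₂), X⁻¹ * Z ∈ mpsSpan v N) :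
    ∀ N, m₃ ≤ N → ∀ Y : Matrix (Fin k) (Fin k) ℂ,
      mpsGamma v N Y = 0 → mpsGamma v (N + m₂) ((X⁻¹)ᴴ * Y) = 0 := by
  intro N hN Y hY
  have key : ∀ Z ∈ mpsSpan v N, (Y * Zᴴ).trace = 0 := by
    intro Z hZ
    induction hZ using Submodule.span_induction with
    | mem Z hZ =>
      obtain ⟨μs, rfl⟩ := hZ
      exact congrFun hY μs
    | zero => simp
    | add Z W _ _ hZ hW => simp [Matrix.mul_add, hZ, hW]
    | smul c Z _ hZ =>
      simp [Matrix.mul_smul, hZ]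
  funext μs
  have hmem : mpsWord v μs ∈ mpsSpan v (N + m₂) :=
    Submodule.subset_span ⟨μs, rfl⟩
  have h1 := key _ (hXK N hN _ hmem)
  rw [Matrix.conjTranspose_mul] at h1
  simp only [mpsGamma, Pi.zero_apply]
  rw [Matrix.mul_assoc, Matrix.trace_mul_comm, Matrix.mul_assoc]
  exact h1
end

section
/- Let T : M_k(ℂ) → M_k(ℂ) be a positive linear map. Then the following are equivalent: (1) there is no nontrivial orthogonal projection P with T(P M_k(ℂ) P) ⊆ P M_k(ℂ) P; (2) for every nonzero positive semidefinite A and every t > 0, the matrix exp(tT)(A) := Σ_{m≥0} (t^m/m!) T^m(A) is positive definite. -/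
open scoped Matrix ComplexOrder

namespace Stmt16Aux
variable {k : ℕ}

lemma ext_mulVec {S R : Matrix (Fin k) (Fin k) ℂ}
    (h : ∀ y, S *ᵥ y = R *ᵥ y) : S = R := by
  funext i j
  have := congrFun (h (Pi.single j 1)) i
  simpa [Matrix.mulVec_single] using this

lemma sum_mulVec {ι : Type*} (s : Finset ι) (f : ι → Matrix (Fin k) (Fin k) ℂ)
    (x : Fin k → ℂ) : (∑ i ∈ s, f i) *ᵥ x = ∑ i ∈ s, f i *ᵥ x := by
  classical
  induction s using Finset.induction with
  | empty => simp [Matrix.zero_mulVec]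
  | insert _ _ h ih => simp [Finset.sum_insert h, Matrix.add_mulVec, ih]

lemma psd_sum {ι : Type*} (s : Finset ι) (f : ι → Matrix (Fin k) (Fin k) ℂ)
    (h : ∀ i ∈ s, (f i).PosSemidef) : (∑ i ∈ s, f i).PosSemidef := by
  classical
  exact Finset.sum_induction f _ (fun a b ha hb => ha.add hb) Matrix.PosSemidef.zero h

lemma psd_smul {c : ℝ} (hc : 0 ≤ c) {S : Matrix (Fin k) (Fin k) ℂ}
    (hS : S.PosSemidef) : ((c : ℂ) • S).PosSemidef := by
  refine Matrix.PosSemidef.of_dotProduct_mulVec_nonneg ?_ ?_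
  · have : ((c:ℂ) • S)ᴴ = star (c:ℂ) • Sᴴ := Matrix.conjTranspose_smul _ _
    rw [Matrix.IsHermitian, this, Complex.star_def, Complex.conj_ofReal, hS.1]
  · intro x
    rw [Matrix.smul_mulVec, dotProduct_smul]
    have hc' : (0:ℂ) ≤ (c:ℂ) := by
      rw [Complex.zero_le_real]; exact hc
    exact smul_nonneg hc' (hS.dotProduct_mulVec_nonneg x)

lemma psd_kernel_le {S R : Matrix (Fin k) (Fin k) ℂ} (hS : S.PosSemidef)
    (hRS : (R - S).PosSemidef) {y : Fin k → ℂ} (hy : R *ᵥ y = 0) : S *ᵥ y = 0 := by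
  have h1 : star y ⬝ᵥ S *ᵥ y + star y ⬝ᵥ (R - S) *ᵥ y = 0 := by
    rw [← dotProduct_add, ← Matrix.add_mulVec]
    simp [hy]
  have h2 := (add_eq_zero_iff_of_nonneg (hS.dotProduct_mulVec_nonneg y) (hRS.dotProduct_mulVec_nonneg y)).mp h1
  exact (hS.dotProduct_mulVec_zero_iff y).mp h2.1

lemma sandwich_dot {P : Matrix (Fin k) (Fin k) ℂ} (hP : P.IsHermitian)
    (M : Matrix (Fin k) (Fin k) ℂ) (x : Fin k → ℂ) :
    star x ⬝ᵥ (P * M * P) *ᵥ x = star (P *ᵥ x) ⬝ᵥ M *ᵥ (P *ᵥ x) := by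
  rw [Matrix.star_mulVec, hP.eq]
  rw [← Matrix.mulVec_mulVec, ← Matrix.mulVec_mulVec, Matrix.dotProduct_mulVec,
    Matrix.mulVec_mulVec]




lemma conj_psd (U : Matrix (Fin k) (Fin k) ℂ) (g : Fin k → ℂ) (hg : ∀ i, 0 ≤ g i) :
    (U * Matrix.diagonal g * star U).PosSemidef := by
  rw [Matrix.star_eq_conjTranspose]
  exact (Matrix.PosSemidef.diagonal hg).mul_mul_conjTranspose_same U

lemma conj_mul {U : Matrix (Fin k) (Fin k) ℂ} (hU : star U * U = 1)
    (a b : Fin k → ℂ) :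
    (U * Matrix.diagonal a * star U) * (U * Matrix.diagonal b * star U)
      = U * Matrix.diagonal (a * b) * star U := by
  have : U * Matrix.diagonal a * star U * (U * Matrix.diagonal b * star U)
      = U * (Matrix.diagonal a * (star U * U) * Matrix.diagonal b) * star U := by
    noncomm_ring
  rw [this, hU, mul_one, Matrix.diagonal_mul_diagonal]
  rfl

lemma conj_herm (U : Matrix (Fin k) (Fin k) ℂ) (g : Fin k → ℝ) :
    (U * Matrix.diagonal (fun i => (g i : ℂ)) * star U).IsHermitian := by
  rw [Matrix.star_eq_conjTranspose, Matrix.IsHermitian]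
  rw [Matrix.conjTranspose_mul, Matrix.conjTranspose_mul, Matrix.conjTranspose_conjTranspose,
    Matrix.diagonal_conjTranspose]
  have : star (fun i => (g i : ℂ)) = fun i => (g i : ℂ) := by
    funext i; simp [Complex.star_def, Complex.conj_ofReal]
  rw [this, Matrix.mul_assoc]

lemma conj_mulVec_zero {U : Matrix (Fin k) (Fin k) ℂ} (hU : star U * U = 1)
    (g : Fin k → ℂ) (y : Fin k → ℂ) :
    (U * Matrix.diagonal g * star U) *ᵥ y = 0 ↔ ∀ i, g i * ((star U *ᵥ y) i) = 0 := by
  have hUinj : ∀ z : Fin k → ℂ, U *ᵥ z = 0 → z = 0 := by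
    intro z hz
    have : (star U * U) *ᵥ z = star U *ᵥ (U *ᵥ z) := (Matrix.mulVec_mulVec _ _ _).symm
    rw [hU, Matrix.one_mulVec, hz, Matrix.mulVec_zero] at this
    exact this
  constructor
  · intro h i
    have h2 : U *ᵥ (Matrix.diagonal g *ᵥ (star U *ᵥ y)) = 0 := by
      rw [Matrix.mulVec_mulVec, Matrix.mulVec_mulVec]; exact h
    have h3 := hUinj _ h2
    have := congrFun h3 i
    rwa [Matrix.mulVec_diagonal] at this
  · intro h
    rw [← Matrix.mulVec_mulVec, ← Matrix.mulVec_mulVec]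
    have : Matrix.diagonal g *ᵥ (star U *ᵥ y) = 0 := by
      funext i; rw [Matrix.mulVec_diagonal]; exact h i
    rw [this, Matrix.mulVec_zero]

/-- Every PSD matrix is bounded above by a nonneg multiple of the identity. -/
lemma bound_psd {M : Matrix (Fin k) (Fin k) ℂ} (hM : M.PosSemidef) :
    ∃ c : ℝ, 0 ≤ c ∧ ((c : ℂ) • 1 - M).PosSemidef := by
  classical
  set hH := hM.isHermitian with hHdef
  set U : Matrix (Fin k) (Fin k) ℂ := (hH.eigenvectorUnitary : Matrix (Fin k) (Fin k) ℂ) with hUdef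
  have hUU : U * star U = 1 := Matrix.mem_unitaryGroup_iff.mp (hH.eigenvectorUnitary).2
  set d := hH.eigenvalues with hddef
  have hd : ∀ i, 0 ≤ d i := hM.eigenvalues_nonneg
  refine ⟨∑ i, d i, Finset.sum_nonneg (fun i _ => hd i), ?_⟩
  have hspec : M = U * Matrix.diagonal (RCLike.ofReal ∘ d) * star U := hH.spectral_theorem
  set c : ℝ := ∑ i, d i with hcdef
  have h1 : (c : ℂ) • (1 : Matrix (Fin k) (Fin k) ℂ)
      = U * Matrix.diagonal (fun _ => (c : ℂ)) * star U := by
    have : Matrix.diagonal (fun _ : Fin k => (c : ℂ)) = (c : ℂ) • 1 := by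
      funext i j
      by_cases h : i = j <;> simp [Matrix.diagonal, h]
    rw [this]
    rw [Matrix.mul_smul, Matrix.smul_mul, mul_one, hUU]
  rw [hspec, h1, ← Matrix.sub_mul, ← Matrix.mul_sub]
  have hdiag : (Matrix.diagonal fun _ : Fin k => (c:ℂ)) - Matrix.diagonal (RCLike.ofReal ∘ d)
      = Matrix.diagonal (fun i => (c:ℂ) - (RCLike.ofReal ∘ d) i) := (Matrix.diagonal_sub _ _)
  rw [hdiag]
  have : (fun i => (c:ℂ) - (RCLike.ofReal ∘ d) i) = fun i => ((c - d i : ℝ) : ℂ) := by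
    funext i; push_cast; rfl
  rw [this]
  have : (fun i => ((c - d i : ℝ) : ℂ)) = fun i => (((c - d i : ℝ) : ℂ)) := rfl
  apply conj_psd
  intro i
  rw [Complex.zero_le_real]
  have := Finset.single_le_sum (f := d) (fun j _ => hd j) (Finset.mem_univ i)
  simpa [hcdef] using sub_nonneg.mpr this



set_option maxHeartbeats 1000000 in
lemma exists_proj (T : Module.End ℂ (Matrix (Fin k) (Fin k) ℂ))
    (hTpos : ∀ A : Matrix (Fin k) (Fin k) ℂ, A.PosSemidef → (T A).PosSemidef)
    {A : Matrix (Fin k) (Fin k) ℂ} (hA : A.PosSemidef) (hA0 : A ≠ 0)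
    {x : Fin k → ℂ} (hx : x ≠ 0) (hzero : ∀ m : ℕ, ((T ^ m) A) *ᵥ x = 0) :
    ∃ P : Matrix (Fin k) (Fin k) ℂ, P.IsHermitian ∧ P * P = P ∧ P ≠ 0 ∧ P ≠ 1 ∧
      ∀ X : Matrix (Fin k) (Fin k) ℂ, T (P * X * P) = P * (T (P * X * P)) * P := by
  classical
  have hTm : ∀ m, ((T ^ m) A).PosSemidef := by
    intro m
    induction m with
    | zero => simpa using hA
    | succ m ih => rw [pow_succ', Module.End.mul_apply]; exact hTpos _ ih
  set C : ℕ → Matrix (Fin k) (Fin k) ℂ :=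
    fun n => ∑ m ∈ Finset.range n, (T ^ m) A with hCdef
  have hC : ∀ n, (C n).PosSemidef := fun n => psd_sum _ _ (fun i _ => hTm i)
  have hCx : ∀ n, C n *ᵥ x = 0 := by
    intro n
    rw [hCdef]
    rw [sum_mulVec]
    simp [hzero]
  have hCsub : ∀ a b : ℕ, a ≤ b → (C b - C a).PosSemidef := by
    intro a b hab
    have h : C b - C a = ∑ m ∈ Finset.Ico a b, (T ^ m) A :=
      (Finset.sum_Ico_eq_sub _ hab).symm
    rw [h]
    exact psd_sum _ _ (fun i _ => hTm i)
  have hC1 : C 1 = A := by simp [hCdef]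
  have hTC : ∀ n, C (n + 1) = A + T (C n) := by
    intro n
    have h1 : T (C n) = ∑ m ∈ Finset.range n, (T ^ (m + 1)) A := by
      rw [hCdef, map_sum]
      exact Finset.sum_congr rfl fun m _ => by rw [pow_succ', Module.End.mul_apply]
    rw [h1]
    show ∑ m ∈ Finset.range (n+1), (T ^ m) A = _
    rw [Finset.sum_range_succ']
    simp [add_comm]
  set K : ℕ → Submodule ℂ (Fin k → ℂ) :=
    fun n => LinearMap.ker ((C n).mulVecLin) with hKdef
  have hKmono : ∀ n, K (n + 1) ≤ K n := by
    intro n y hy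
    rw [hKdef, LinearMap.mem_ker, Matrix.mulVecLin_apply] at hy ⊢
    exact psd_kernel_le (hC n) (hCsub n (n + 1) (Nat.le_succ n)) hy
  obtain ⟨n, hn1, hKn⟩ : ∃ n, 1 ≤ n ∧ K n = K (n + 1) := by
    by_contra hcon
    push_neg at hcon
    have hstep : ∀ n, 1 ≤ n →
        Module.finrank ℂ (K (n + 1)) < Module.finrank ℂ (K n) := by
      intro n hn
      exact Submodule.finrank_lt_finrank_of_lt
        (lt_of_le_of_ne (hKmono n) (fun h => hcon n hn h.symm))
    have hchain : ∀ j, Module.finrank ℂ (K (j + 1)) + j ≤ Module.finrank ℂ (K 1) := by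
      intro j
      induction j with
      | zero => simp
      | succ j ih =>
          have := hstep (j + 1) (by omega)
          omega
    have hle : Module.finrank ℂ (K 1) ≤ k := by
      have h := Submodule.finrank_le (K 1)
      simpa using h
    have := hchain (k + 1)
    omega
  set Q := C n with hQdef
  set hH := (hC n).isHermitian with hHdef
  set U : Matrix (Fin k) (Fin k) ℂ := (hH.eigenvectorUnitary : Matrix (Fin k) (Fin k) ℂ)
    with hUdef
  have hUU : U * star U = 1 := Matrix.mem_unitaryGroup_iff.mp hH.eigenvectorUnitary.2
  have hU'U : star U * U = 1 := Matrix.mem_unitaryGroup_iff'.mp hH.eigenvectorUnitary.2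
  set d := hH.eigenvalues with hddef
  have hd : ∀ i, 0 ≤ d i := (hC n).eigenvalues_nonneg
  have hspec : Q = U * Matrix.diagonal (RCLike.ofReal ∘ d) * star U := hH.spectral_theorem
  set g : Fin k → ℝ := fun i => if d i = 0 then 0 else 1 with hgdef
  set e : Fin k → ℂ := fun i => (g i : ℂ) with hedef
  set P := U * Matrix.diagonal e * star U with hPdef
  have hPherm : P.IsHermitian := conj_herm U g
  have hPP : P * P = P := by
    rw [hPdef, conj_mul hU'U]
    have hee : e * e = e := by
      funext i
      by_cases h : d i = 0 <;> simp [hedef, hgdef, h]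
    rw [hee]
  have hPpsd : P.PosSemidef := by
    apply conj_psd
    intro i
    rw [hedef]
    simp only []
    rw [Complex.zero_le_real]
    by_cases h : d i = 0 <;> simp [hgdef, h]
  have hPkernel : ∀ y, (P *ᵥ y = 0 ↔ Q *ᵥ y = 0) := by
    intro y
    rw [hPdef, conj_mulVec_zero hU'U, hspec, conj_mulVec_zero hU'U]
    constructor
    · intro h i
      by_cases hdi : d i = 0
      · simp [Function.comp, hdi]
      · have := h i
        simp only [hedef, hgdef, hdi, if_neg hdi, ite_false] at this
        simp only [Complex.ofReal_one, one_mul] at this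
        simp [Function.comp, this]
    · intro h i
      by_cases hdi : d i = 0
      · simp [hedef, hgdef, hdi]
      · have := h i
        have hne : ((d i : ℂ)) ≠ 0 := by
          simpa using Complex.ofReal_ne_zero.mpr hdi
        have hz : (star U *ᵥ y) i = 0 := by
          have := mul_eq_zero.mp this
          tauto
        simp [hedef, hgdef, hdi, hz]
  set lam : ℝ := ∑ i, (if d i = 0 then 0 else (d i)⁻¹) with hlamdef
  have hlam0 : 0 ≤ lam := by
    apply Finset.sum_nonneg
    intro i _
    by_cases h : d i = 0 <;> simp [h, inv_nonneg, hd i]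
  have hlamQ : (((lam : ℝ) : ℂ) • Q - P).PosSemidef := by
    have h2 : U * Matrix.diagonal (((lam:ℝ):ℂ) • (RCLike.ofReal ∘ d)) * star U
        = ((lam : ℝ) : ℂ) • (U * Matrix.diagonal (RCLike.ofReal ∘ d) * star U) := by
      rw [Matrix.diagonal_smul, Matrix.mul_smul, Matrix.smul_mul]
    rw [hspec, hPdef, ← h2, ← Matrix.sub_mul, ← Matrix.mul_sub]
    have hdiag : Matrix.diagonal (((lam:ℝ):ℂ) • (RCLike.ofReal ∘ d)) - Matrix.diagonal e
        = Matrix.diagonal (fun i => ((lam * d i - g i : ℝ) : ℂ)) := by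
      rw [Matrix.diagonal_sub]
      congr 1
      funext i
      simp only [hedef, Pi.smul_apply, Function.comp_apply, smul_eq_mul]
      push_cast
      rfl
    rw [hdiag]
    apply conj_psd
    intro i
    rw [Complex.zero_le_real]
    by_cases h : d i = 0
    · simp [hgdef, h]
    · have hdi : 0 < d i := lt_of_le_of_ne (hd i) (Ne.symm h)
      have hlam_ge : (d i)⁻¹ ≤ lam := by
        rw [hlamdef]
        have := Finset.single_le_sum
          (f := fun j => if d j = 0 then 0 else (d j)⁻¹)
          (fun j _ => by by_cases hj : d j = 0 <;> simp [hj, inv_nonneg, hd j])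
          (Finset.mem_univ i)
        simpa [h] using this
      have : 1 ≤ lam * d i := by
        calc (1:ℝ) = (d i)⁻¹ * d i := by field_simp
        _ ≤ lam * d i := by
            apply mul_le_mul_of_nonneg_right hlam_ge (le_of_lt hdi)
      simp only [hgdef, if_neg h]
      linarith
  clear_value P Q
  -- P ≠ 0
  have hP0 : P ≠ 0 := by
    intro h0
    have hQ0 : ∀ y, Q *ᵥ y = 0 := fun y => (hPkernel y).mp (by rw [h0, Matrix.zero_mulVec])
    have hQA : (Q - A).PosSemidef := by
      rw [hQdef, ← hC1]
      exact hCsub 1 n hn1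
    have hAy : ∀ y, A *ᵥ y = (0 : Matrix (Fin k) (Fin k) ℂ) *ᵥ y := by
      intro y
      rw [Matrix.zero_mulVec]
      exact psd_kernel_le hA hQA (hQ0 y)
    exact hA0 (ext_mulVec hAy)
  -- P ≠ 1
  have hP1 : P ≠ 1 := by
    intro h1
    have : P *ᵥ x = 0 := (hPkernel x).mpr (by rw [hQdef]; exact hCx n)
    rw [h1, Matrix.one_mulVec] at this
    exact hx this
  -- invariance for PSD matrices supported on P
  have hinv_psd : ∀ M : Matrix (Fin k) (Fin k) ℂ, M.PosSemidef → P * M * P = M →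
      T M = P * (T M) * P := by
    intro M hMpsd hPMP
    obtain ⟨c, hc0, hcb⟩ := bound_psd hMpsd
    have h1 : ((c : ℂ) • P - M).PosSemidef := by
      refine Matrix.PosSemidef.of_dotProduct_mulVec_nonneg ?_ ?_
      · show ((c : ℂ) • P - M)ᴴ = _
        rw [Matrix.conjTranspose_sub, Matrix.conjTranspose_smul,
          Complex.star_def, Complex.conj_ofReal, hPherm.eq, hMpsd.isHermitian.eq]
      · intro z
        have e2 : star z ⬝ᵥ M *ᵥ z = star (P *ᵥ z) ⬝ᵥ M *ᵥ (P *ᵥ z) := by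
          conv_lhs => rw [← hPMP]
          exact sandwich_dot hPherm M z
        have e3 : star z ⬝ᵥ P *ᵥ z = star (P *ᵥ z) ⬝ᵥ (1 : Matrix (Fin k) (Fin k) ℂ) *ᵥ (P *ᵥ z) := by
          have hP1' : (P : Matrix (Fin k) (Fin k) ℂ) = P * 1 * P := by
            rw [mul_one, hPP]
          conv_lhs => rw [hP1']
          exact sandwich_dot hPherm 1 z
        have e1 : star z ⬝ᵥ ((c:ℂ) • P - M) *ᵥ z
            = star (P *ᵥ z) ⬝ᵥ ((c:ℂ) • 1 - M) *ᵥ (P *ᵥ z) := by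
          rw [Matrix.sub_mulVec, dotProduct_sub, Matrix.sub_mulVec,
            dotProduct_sub, e2, Matrix.smul_mulVec, Matrix.smul_mulVec,
            dotProduct_smul, dotProduct_smul, e3]
        rw [e1]
        exact hcb.dotProduct_mulVec_nonneg _
    have h2 : (((c * lam : ℝ) : ℂ) • Q - M).PosSemidef := by
      have hsum := (psd_smul hc0 hlamQ).add h1
      have heq : (c:ℂ) • (((lam:ℝ):ℂ) • Q - P) + ((c:ℂ) • P - M)
          = ((c * lam : ℝ) : ℂ) • Q - M := by
        rw [smul_sub, smul_smul, ← Complex.ofReal_mul]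
        abel
      rwa [heq] at hsum
    have h3 : (((c * lam : ℝ) : ℂ) • T Q - T M).PosSemidef := by
      have := hTpos _ h2
      rwa [map_sub, map_smul] at this
    have hTQ : T Q = C (n + 1) - A := by
      rw [hQdef, hTC n]
      abel
    have h4 : (((c * lam : ℝ) : ℂ) • C (n + 1) - T M).PosSemidef := by
      have hsum := h3.add (psd_smul (mul_nonneg hc0 hlam0) hA)
      have heq : (((c * lam : ℝ) : ℂ) • T Q - T M) + ((c * lam : ℝ) : ℂ) • A
          = ((c * lam : ℝ) : ℂ) • C (n + 1) - T M := by
        rw [hTQ, smul_sub]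
        abel
      rwa [heq] at hsum
    have h5 : ∀ y, P *ᵥ y = 0 → T M *ᵥ y = 0 := by
      intro y hy
      have hQy : Q *ᵥ y = 0 := (hPkernel y).mp hy
      have hy1 : y ∈ K n := by
        rw [hKdef, LinearMap.mem_ker, Matrix.mulVecLin_apply]
        rw [hQdef] at hQy
        exact hQy
      have hy2 : C (n + 1) *ᵥ y = 0 := by
        have hmem : y ∈ K (n + 1) := hKn ▸ hy1
        rw [hKdef, LinearMap.mem_ker, Matrix.mulVecLin_apply] at hmem
        exact hmem
      apply psd_kernel_le (hTpos M hMpsd) h4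
      rw [Matrix.smul_mulVec, hy2, smul_zero]
    have hTMP : T M * P = T M := by
      apply ext_mulVec
      intro y
      rw [← Matrix.mulVec_mulVec]
      have hPy : P *ᵥ (y - P *ᵥ y) = 0 := by
        rw [Matrix.mulVec_sub, Matrix.mulVec_mulVec, hPP, sub_self]
      have h6 : T M *ᵥ (y - P *ᵥ y) = 0 := h5 _ hPy
      rw [Matrix.mulVec_sub] at h6
      have := sub_eq_zero.mp h6
      exact this.symm
    have hPTM : P * T M = T M := by
      have hh := (hTpos M hMpsd).isHermitian
      have h7 := congrArg Matrix.conjTranspose hTMP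
      rw [Matrix.conjTranspose_mul, hh.eq, hPherm.eq] at h7
      exact h7
    rw [Matrix.mul_assoc, hTMP, hPTM]
  -- invariance for hermitian matrices supported on P
  have hgood_herm : ∀ H : Matrix (Fin k) (Fin k) ℂ, H.IsHermitian → P * H * P = H →
      T H = P * (T H) * P := by
    intro H hHerm hPHP
    have hHP : H * P = H := by
      have h := Matrix.mul_assoc (P * H) P P
      rw [hPP] at h
      rw [hPHP] at h
      exact h
    have hPH : P * H = H := by
      have h : P * (P * H * P) = (P * P) * H * P := by
        simp only [Matrix.mul_assoc]
      rw [hPP, hPHP] at h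
      exact h
    have g3 : T P = P * T P * P := hinv_psd P hPpsd (by rw [hPP, hPP])
    have hHPherm : (H + P).IsHermitian := hHerm.add hPherm
    have hsq : ∀ (N : Matrix (Fin k) (Fin k) ℂ), N.IsHermitian → (N * N).PosSemidef := by
      intro N hN
      have := Matrix.posSemidef_conjTranspose_mul_self N
      rwa [hN.eq] at this
    have e1 : P * (H + P) = H + P := by rw [Matrix.mul_add, hPH, hPP]
    have e2 : (H + P) * P = H + P := by rw [Matrix.add_mul, hHP, hPP]
    have g1 : T ((H + P) * (H + P)) = P * T ((H + P) * (H + P)) * P := by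
      apply hinv_psd _ (hsq _ hHPherm)
      have hassoc : P * ((H + P) * (H + P)) * P = (P * (H + P)) * ((H + P) * P) := by
        simp only [Matrix.mul_assoc]
      rw [hassoc, e1, e2]
    have g2 : T (H * H) = P * T (H * H) * P := by
      apply hinv_psd _ (hsq _ hHerm)
      have hassoc : P * (H * H) * P = (P * H) * (H * P) := by
        simp only [Matrix.mul_assoc]
      rw [hassoc, hPH, hHP]
    have hexp : (H + P) * (H + P) = H * H + H + H + P := by
      rw [Matrix.add_mul, Matrix.mul_add, Matrix.mul_add, hHP, hPH, hPP]
      abel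
    have hid : H = (2⁻¹ : ℂ) • ((H + P) * (H + P) - H * H - P) := by
      rw [hexp]
      have : H * H + H + H + P - H * H - P = H + H := by abel
      rw [this]
      module
    rw [hid, map_smul, map_sub, map_sub, Matrix.mul_smul, Matrix.smul_mul]
    congr 1
    rw [Matrix.mul_sub, Matrix.mul_sub, Matrix.sub_mul, Matrix.sub_mul]
    rw [← g1, ← g2, ← g3]
  refine ⟨P, hPherm, hPP, hP0, hP1, ?_⟩
  intro X
  set Y := P * X * P with hYdef
  have hPYP : P * Y * P = Y := by
    have h : P * (P * X * P) * P = P * P * X * (P * P) := by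
      simp only [Matrix.mul_assoc]
    rw [hYdef, h, hPP]
  have hPYhP : P * Yᴴ * P = Yᴴ := by
    have h7 := congrArg Matrix.conjTranspose hPYP
    have h8 : (P * Y * P)ᴴ = Pᴴ * Yᴴ * Pᴴ := by
      rw [Matrix.conjTranspose_mul, Matrix.conjTranspose_mul]
      simp only [Matrix.mul_assoc]
    rw [h8, hPherm.eq] at h7
    exact h7
  clear_value Y
  set Hm := (2⁻¹ : ℂ) • (Y + Yᴴ) with hHmdef
  set Km := (-(Complex.I) / 2) • (Y - Yᴴ) with hKmdef
  clear_value Hm Km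
  have hHmherm : Hm.IsHermitian := by
    show Hmᴴ = Hm
    rw [hHmdef, Matrix.conjTranspose_smul, Matrix.conjTranspose_add,
      Matrix.conjTranspose_conjTranspose]
    have hs : star (2⁻¹ : ℂ) = (2⁻¹ : ℂ) := by
      rw [Complex.star_def, map_inv₀, Complex.conj_ofNat]
    rw [hs, add_comm]
  have hKmherm : Km.IsHermitian := by
    show Kmᴴ = Km
    rw [hKmdef, Matrix.conjTranspose_smul, Matrix.conjTranspose_sub,
      Matrix.conjTranspose_conjTranspose]
    have h1 : star (-(Complex.I) / 2) = Complex.I / 2 := by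
      simp [Complex.star_def]
    rw [h1]
    have h2 : Yᴴ - Y = -(Y - Yᴴ) := by abel
    rw [h2, smul_neg, ← neg_smul, neg_div]
  have hYdecomp : Y = Hm + Complex.I • Km := by
    rw [hHmdef, hKmdef, smul_smul]
    have hI : Complex.I * (-(Complex.I) / 2) = (2⁻¹ : ℂ) := by
      rw [mul_div_assoc', mul_neg, Complex.I_mul_I, neg_neg]
      norm_num
    rw [hI]
    module
  have hPHmP : P * Hm * P = Hm := by
    rw [hHmdef, Matrix.mul_smul, Matrix.smul_mul]
    congr 1
    rw [Matrix.mul_add, Matrix.add_mul, hPYP, hPYhP]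
  have hPKmP : P * Km * P = Km := by
    rw [hKmdef, Matrix.mul_smul, Matrix.smul_mul]
    congr 1
    rw [Matrix.mul_sub, Matrix.sub_mul, hPYP, hPYhP]
  have r1 : T Hm = P * T Hm * P := hgood_herm Hm hHmherm hPHmP
  have r2 : T Km = P * T Km * P := hgood_herm Km hKmherm hPKmP
  rw [hYdecomp, map_add, map_smul, Matrix.mul_add, Matrix.add_mul,
    Matrix.mul_smul, Matrix.smul_mul, ← r1, ← r2]

lemma summable_series (T : Module.End ℂ (Matrix (Fin k) (Fin k) ℂ))
    (A : Matrix (Fin k) (Fin k) ℂ) (t : ℝ) :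
    Summable (fun m : ℕ => ((t ^ m / m.factorial : ℝ) : ℂ) • (T ^ m) A) := by
  letI : NormedAddCommGroup (Matrix (Fin k) (Fin k) ℂ) := Matrix.normedAddCommGroup
  letI : NormedSpace ℂ (Matrix (Fin k) (Fin k) ℂ) := Matrix.normedSpace
  set L := LinearMap.toContinuousLinearMap (T : Matrix (Fin k) (Fin k) ℂ →ₗ[ℂ] Matrix (Fin k) (Fin k) ℂ) with hL
  have hLa : ∀ X, L X = T X := fun X => rfl
  letI : Norm (Matrix (Fin k) (Fin k) ℂ →L[ℂ] Matrix (Fin k) (Fin k) ℂ) := by exact ContinuousLinearMap.hasOpNorm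
  have hpow : ∀ m (X : Matrix (Fin k) (Fin k) ℂ), ‖(T ^ m) X‖ ≤ ‖L‖ ^ m * ‖X‖ := by
    intro m
    induction m with
    | zero => intro X; simp
    | succ m ih =>
      intro X
      have h1 : (T ^ (m+1)) X = T ((T ^ m) X) := by
        rw [pow_succ', Module.End.mul_apply]
      rw [h1, ← hLa]
      calc ‖L ((T^m) X)‖ ≤ ‖L‖ * ‖(T^m) X‖ := L.le_opNorm _
        _ ≤ ‖L‖ * (‖L‖^m * ‖X‖) := by
            apply mul_le_mul_of_nonneg_left (ih X) (by exact L.opNorm_nonneg)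
        _ = ‖L‖^(m+1) * ‖X‖ := by ring
  apply Summable.of_norm_bounded (g := fun m => ‖A‖ * ((|t| * ‖L‖) ^ m / m.factorial))
  · exact (Real.summable_pow_div_factorial _).mul_left _
  · intro m
    rw [norm_smul]
    have h2 : ‖((t ^ m / m.factorial : ℝ) : ℂ)‖ = |t|^m / m.factorial := by
      rw [Complex.norm_real, Real.norm_eq_abs, abs_div, abs_pow, Nat.abs_cast]
    rw [h2]
    calc |t|^m / m.factorial * ‖(T^m) A‖ ≤ |t|^m / m.factorial * (‖L‖^m * ‖A‖) := by
          apply mul_le_mul_of_nonneg_left (hpow m A)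
          positivity
      _ = ‖A‖ * ((|t| * ‖L‖) ^ m / m.factorial) := by
          rw [mul_pow]
          ring

lemma dot_tsum (f : ℕ → Matrix (Fin k) (Fin k) ℂ) (hf : Summable f) (x : Fin k → ℂ) :
    HasSum (fun m => star x ⬝ᵥ (f m) *ᵥ x) (star x ⬝ᵥ (∑' m, f m) *ᵥ x) := by
  letI : NormedAddCommGroup (Matrix (Fin k) (Fin k) ℂ) := Matrix.normedAddCommGroup
  letI : NormedSpace ℂ (Matrix (Fin k) (Fin k) ℂ) := Matrix.normedSpace
  have hs := hf.hasSum
  let φ : Matrix (Fin k) (Fin k) ℂ →ₗ[ℂ] ℂ :=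
    { toFun := fun M => star x ⬝ᵥ M *ᵥ x
      map_add' := fun M N => by
        simp only [Matrix.add_mulVec, dotProduct_add]
      map_smul' := fun c M => by
        simp only [Matrix.smul_mulVec, dotProduct_smul]
        rfl }
  exact (LinearMap.toContinuousLinearMap φ).hasSum hs

lemma herm_tsum (f : ℕ → Matrix (Fin k) (Fin k) ℂ) (hf : Summable f)
    (hherm : ∀ m, (f m).IsHermitian) : (∑' m, f m).IsHermitian := by
  have hclosed : IsClosed {M : Matrix (Fin k) (Fin k) ℂ | M.IsHermitian} := by
    have : {M : Matrix (Fin k) (Fin k) ℂ | M.IsHermitian}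
        = {M : Matrix (Fin k) (Fin k) ℂ | Mᴴ = M} := rfl
    rw [this]
    exact isClosed_eq (Continuous.matrix_conjTranspose continuous_id) continuous_id
  have hs := hf.hasSum
  refine hclosed.mem_of_tendsto hs.tendsto_sum_nat (Filter.Eventually.of_forall fun n => ?_)
  show (∑ m ∈ Finset.range n, f m).IsHermitian
  show (∑ m ∈ Finset.range n, f m)ᴴ = _
  rw [Matrix.conjTranspose_sum]
  exact Finset.sum_congr rfl fun m _ => (hherm m).eq

end Stmt16Aux

open Stmt16Aux in
/-- For a positive linear map `T` on `M_k(ℂ)`, the following are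
equivalent: (1) there is no nontrivial orthogonal projection `P` with
`T(P M_k(ℂ) P) ⊆ P M_k(ℂ) P`; (2) for every nonzero positive semidefinite `A`
and every `t > 0`, `exp(tT)(A) = Σ_m (t^m/m!) T^m(A)` is positive definite. -/
theorem stmt16 (k : ℕ) (hk : 0 < k)
    (T : Module.End ℂ (Matrix (Fin k) (Fin k) ℂ))
    (hTpos : ∀ A : Matrix (Fin k) (Fin k) ℂ, A.PosSemidef → (T A).PosSemidef) :
    (¬ ∃ P : Matrix (Fin k) (Fin k) ℂ,
        P.IsHermitian ∧ P * P = P ∧ P ≠ 0 ∧ P ≠ 1 ∧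
        ∀ A : Matrix (Fin k) (Fin k) ℂ, T (P * A * P) = P * (T (P * A * P)) * P) ↔
    (∀ A : Matrix (Fin k) (Fin k) ℂ, A.PosSemidef → A ≠ 0 → ∀ t : ℝ, 0 < t →
        (∑' m : ℕ, ((t ^ m / m.factorial : ℝ) : ℂ) • (T ^ m) A).PosDef) := by
  constructor
  · intro hirr A hA hA0 t ht
    set f : ℕ → Matrix (Fin k) (Fin k) ℂ :=
      fun m => ((t ^ m / m.factorial : ℝ) : ℂ) • (T ^ m) A with hfdef
    have hsum : Summable f := summable_series T A t
    have hTm : ∀ m, ((T ^ m) A).PosSemidef := by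
      intro m
      induction m with
      | zero => simpa using hA
      | succ m ih => rw [pow_succ', Module.End.mul_apply]; exact hTpos _ ih
    have hfherm : ∀ m, (f m).IsHermitian := by
      intro m
      show (f m)ᴴ = f m
      rw [hfdef]
      simp only []
      rw [Matrix.conjTranspose_smul, Complex.star_def, Complex.conj_ofReal, (hTm m).isHermitian.eq]
    refine Matrix.PosDef.of_dotProduct_mulVec_pos (herm_tsum f hsum hfherm) ?_
    intro x hx
    have hdot := dot_tsum f hsum x
    have hterm_nonneg : ∀ m, (0 : ℂ) ≤ star x ⬝ᵥ (f m) *ᵥ x := by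
      intro m
      rw [hfdef]
      simp only []
      rw [Matrix.smul_mulVec, dotProduct_smul, smul_eq_mul]
      have hc : (0 : ℂ) ≤ ((t ^ m / m.factorial : ℝ) : ℂ) := by
        rw [Complex.zero_le_real]
        positivity
      exact mul_nonneg hc ((hTm m).dotProduct_mulVec_nonneg x)
    obtain ⟨m0, hm0⟩ : ∃ m, (T ^ m) A *ᵥ x ≠ 0 := by
      by_contra hcon
      push_neg at hcon
      exact hirr (exists_proj T hTpos hA hA0 hx hcon)
    have hterm_pos : (0 : ℂ) < star x ⬝ᵥ (f m0) *ᵥ x := by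
      have hq0 : star x ⬝ᵥ ((T ^ m0) A) *ᵥ x ≠ 0 := fun h =>
        hm0 (((hTm m0).dotProduct_mulVec_zero_iff x).mp h)
      have hqpos : (0 : ℂ) < star x ⬝ᵥ ((T ^ m0) A) *ᵥ x :=
        lt_of_le_of_ne ((hTm m0).dotProduct_mulVec_nonneg x) (Ne.symm hq0)
      have hcpos : (0 : ℂ) < ((t ^ m0 / m0.factorial : ℝ) : ℂ) := by
        rw [Complex.zero_lt_real]
        positivity
      rw [hfdef]
      simp only []
      rw [Matrix.smul_mulVec, dotProduct_smul, smul_eq_mul]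
      exact mul_pos hcpos hqpos
    have him : HasSum (fun m => (star x ⬝ᵥ (f m) *ᵥ x).im)
        ((star x ⬝ᵥ (∑' m, f m) *ᵥ x).im) := Complex.imCLM.hasSum hdot
    have hre : HasSum (fun m => (star x ⬝ᵥ (f m) *ᵥ x).re)
        ((star x ⬝ᵥ (∑' m, f m) *ᵥ x).re) := Complex.reCLM.hasSum hdot
    have him0 : (star x ⬝ᵥ (∑' m, f m) *ᵥ x).im = 0 := by
      have hzero : (fun m => (star x ⬝ᵥ (f m) *ᵥ x).im) = fun _ => (0 : ℝ) := by
        funext m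
        have := (Complex.le_def.mp (hterm_nonneg m)).2
        simpa using this.symm
      rw [hzero] at him
      exact him.unique hasSum_zero
    have hre_pos : 0 < (star x ⬝ᵥ (∑' m, f m) *ᵥ x).re := by
      rw [← hre.tsum_eq]
      apply Summable.tsum_pos ⟨_, hre⟩ (fun m => ?_) m0
      · exact (Complex.lt_def.mp hterm_pos).1
      · have := (Complex.le_def.mp (hterm_nonneg m)).1
        simpa using this
    rw [Complex.lt_def]
    constructor
    · simpa using hre_pos
    · simpa using him0.symm
  · intro hpos
    rintro ⟨P, hherm, hidem, hP0, hP1, hinv⟩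
    have hApsd : P.PosSemidef := by
      have h := Matrix.posSemidef_conjTranspose_mul_self P
      rwa [hherm.eq, hidem] at h
    have hSpos := hpos P hApsd hP0 1 one_pos
    obtain ⟨z, hz⟩ : ∃ z, P *ᵥ z ≠ z := by
      by_contra hcon
      push_neg at hcon
      apply hP1
      apply ext_mulVec
      intro y
      rw [Matrix.one_mulVec]
      exact hcon y
    set y := z - P *ᵥ z with hydef
    have hy0 : y ≠ 0 := by
      intro h
      apply hz
      rw [hydef] at h
      exact (sub_eq_zero.mp h).symm
    have hPy : P *ᵥ y = 0 := by
      rw [hydef, Matrix.mulVec_sub, Matrix.mulVec_mulVec, hidem, sub_self]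
    have hsand : ∀ m : ℕ, (T ^ m) P = P * ((T ^ m) P) * P := by
      intro m
      induction m with
      | zero =>
          show P = P * P * P
          rw [hidem, hidem]
      | succ m ih =>
          rw [pow_succ', Module.End.mul_apply]
          conv_lhs => rw [ih]
          rw [hinv ((T ^ m) P), ← ih]
    set f : ℕ → Matrix (Fin k) (Fin k) ℂ :=
      fun m => (((1 : ℝ) ^ m / m.factorial : ℝ) : ℂ) • (T ^ m) P with hfdef
    have hsum : Summable f := summable_series T P 1
    have hdot := dot_tsum f hsum y
    have hzero : ∀ m, star y ⬝ᵥ (f m) *ᵥ y = 0 := by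
      intro m
      rw [hfdef]
      simp only []
      rw [Matrix.smul_mulVec, dotProduct_smul]
      have h : ((T ^ m) P) *ᵥ y = 0 := by
        rw [hsand m, ← Matrix.mulVec_mulVec, hPy, Matrix.mulVec_zero]
      rw [h, dotProduct_zero, smul_zero]
    have hS0 : star y ⬝ᵥ (∑' m, f m) *ᵥ y = 0 := by
      have h0 : HasSum (fun m => star y ⬝ᵥ (f m) *ᵥ y) 0 := by
        have : (fun m => star y ⬝ᵥ (f m) *ᵥ y) = fun _ => (0 : ℂ) := funext hzero
        rw [this]
        exact hasSum_zero
      exact hdot.unique h0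
    have hlt := hSpos.dotProduct_mulVec_pos hy0
    rw [hS0] at hlt
    exact lt_irrefl _ hlt
end

section
/- Let φ, φ' be states on M_k(ℂ), and L : A → M_k(ℂ) a unital completely positive map from a unital C*-algebra A. Denote by Ξ(σ) := σ ∘ L the induced states on A for states σ on M_k(ℂ). If ‖Ξ(φ) − Ξ(φ')‖ = 2 (the maximal possible norm distance), then the support projections of φ and φ' in M_k(ℂ) are orthogonal. Equivalently: if the supports of φ and φ' are not orthogonal, then ‖Ξ(φ) − Ξ(φ')‖ < 2. -/
open scoped Matrix ComplexOrder


section Aux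

variable {k : ℕ} {A : Type*} [NormedRing A] [StarRing A] [CStarRing A]
    [NormedAlgebra ℂ A] [StarModule ℂ A] [CompleteSpace A]
    (L : A →ₗ[ℂ] Matrix (Fin k) (Fin k) ℂ)

set_option linter.unusedSectionVars false
variable {k : ℕ} {A : Type*} [NormedRing A] [StarRing A] [CStarRing A]
    [NormedAlgebra ℂ A] [StarModule ℂ A] [CompleteSpace A]
    (L : A →ₗ[ℂ] Matrix (Fin k) (Fin k) ℂ)

theorem auxPos
    (hLcp : ∀ (m : ℕ) (a : Fin m → A) (x : Fin m → Matrix (Fin k) (Fin k) ℂ),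
      (∑ i, ∑ j, (x i)ᴴ * L (star (a i) * a j) * x j).PosSemidef)
    (b : A) : (L (star b * b)).PosSemidef := by
  have h := hLcp 1 ![b] ![1]
  simpa [Fin.sum_univ_one] using h

theorem auxSum
    (hLunital : L 1 = 1)
    (hLcp : ∀ (m : ℕ) (a : Fin m → A) (x : Fin m → Matrix (Fin k) (Fin k) ℂ),
      (∑ i, ∑ j, (x i)ᴴ * L (star (a i) * a j) * x j).PosSemidef)
    (b : A) (c : Matrix (Fin k) (Fin k) ℂ) :
    (cᴴ * c + cᴴ * L b + L (star b) * c + L (star b * b)).PosSemidef := by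
  have h := hLcp 2 ![1, b] ![c, 1]
  simp only [Fin.sum_univ_two, Matrix.cons_val_zero, Matrix.cons_val_one, Matrix.head_cons,
    star_one, one_mul, mul_one, hLunital, Matrix.conjTranspose_one] at h
  convert h using 1
  abel

theorem auxStar
    (hLunital : L 1 = 1)
    (hLcp : ∀ (m : ℕ) (a : Fin m → A) (x : Fin m → Matrix (Fin k) (Fin k) ℂ),
      (∑ i, ∑ j, (x i)ᴴ * L (star (a i) * a j) * x j).PosSemidef)
    (b : A) : L (star b) = (L b)ᴴ := by
  have hH : (L (star b * b))ᴴ = L (star b * b) := (auxPos L hLcp b).isHermitian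
  have e1 := (auxSum L hLunital hLcp b 1).isHermitian
  have e2 := (auxSum L hLunital hLcp b (Complex.I • 1)).isHermitian
  simp only [Matrix.IsHermitian, Matrix.conjTranspose_add, Matrix.conjTranspose_mul,
    Matrix.conjTranspose_smul, Matrix.conjTranspose_one, Matrix.conjTranspose_conjTranspose, Matrix.conjTranspose_neg,
    hH, one_mul, mul_one, smul_mul_assoc, mul_smul_comm, smul_smul, Complex.star_def,
    Complex.conj_I, one_smul, neg_mul, neg_smul, neg_neg, Complex.I_mul_I] at e1 e2
  have e3 := congrArg (fun X => Complex.I • X) e2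
  simp only [smul_add, smul_neg, smul_smul, Complex.I_mul_I, neg_smul, one_smul, neg_neg] at e3
  linear_combination (norm := module) (-(1:ℂ)/2) • e1 + ((1:ℂ)/2) • e3

theorem auxKS
    (hLunital : L 1 = 1)
    (hLcp : ∀ (m : ℕ) (a : Fin m → A) (x : Fin m → Matrix (Fin k) (Fin k) ℂ),
      (∑ i, ∑ j, (x i)ᴴ * L (star (a i) * a j) * x j).PosSemidef)
    (a : A) : (L (star a * a) - (L a)ᴴ * (L a)).PosSemidef := by
  have h := auxSum L hLunital hLcp a (-(L a))
  rw [auxStar L hLunital hLcp a] at h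
  convert h using 1
  simp only [Matrix.conjTranspose_neg, Matrix.neg_mul, Matrix.mul_neg, neg_neg]
  abel

theorem auxSqrt [Nontrivial A] (a : A) (ha : ‖a‖ ≤ 1) :
    ∃ b : A, (1 : A) - star a * a = star b * b := by
  letI : CStarAlgebra A := { }
  have hsa : IsSelfAdjoint ((1 : A) - star a * a) :=
    (IsSelfAdjoint.one A).sub (IsSelfAdjoint.star_mul_self a)
  have hspec : SpectrumRestricts ((1 : A) - star a * a) ContinuousMap.realToNNReal := by
    rw [SpectrumRestricts.nnreal_iff]
    intro x hx
    have h1 : (1 : A) = algebraMap ℝ A 1 := (map_one _).symm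
    rw [h1, ← spectrum.singleton_sub_eq] at hx
    obtain ⟨u, hu, t, ht, rfl⟩ := hx
    rw [Set.mem_singleton_iff] at hu
    subst hu
    have h2 := spectrum.norm_le_norm_of_mem ht
    have hnorm : ‖star a * a‖ ≤ 1 := by
      calc ‖star a * a‖ ≤ ‖star a‖ * ‖a‖ := norm_mul_le _ _
        _ ≤ 1 := by rw [norm_star]; nlinarith [norm_nonneg a]
    have h3 := h2.trans hnorm
    rw [Real.norm_eq_abs] at h3
    obtain ⟨h4, h5⟩ := abs_le.mp h3
    show (0:ℝ) ≤ 1 - t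
    linarith
  obtain ⟨x, hxsa, -, hx2⟩ := CFC.exists_sqrt_of_isSelfAdjoint_of_quasispectrumRestricts hsa hspec
  exact ⟨x, by rw [← hx2, hxsa.star_eq]⟩

theorem auxContract [Nontrivial A]
    (hLunital : L 1 = 1)
    (hLcp : ∀ (m : ℕ) (a : Fin m → A) (x : Fin m → Matrix (Fin k) (Fin k) ℂ),
      (∑ i, ∑ j, (x i)ᴴ * L (star (a i) * a j) * x j).PosSemidef)
    (a : A) (ha : ‖a‖ ≤ 1) : ((1 : Matrix (Fin k) (Fin k) ℂ) - (L a)ᴴ * (L a)).PosSemidef := by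
  obtain ⟨b, hb⟩ := auxSqrt (A := A) a ha
  have h1 : (L (star b * b)).PosSemidef := auxPos L hLcp b
  have h2 : L (star b * b) = 1 - L (star a * a) := by
    rw [← hb, map_sub, hLunital]
  have h3 : (1 : Matrix (Fin k) (Fin k) ℂ) - (L a)ᴴ * (L a)
      = (1 - L (star a * a)) + (L (star a * a) - (L a)ᴴ * (L a)) := by abel
  rw [h3]
  exact (h2 ▸ h1).add (auxKS L hLunital hLcp a)

end Aux

theorem auxDiag {n : Type*} [Fintype n] [DecidableEq n] {N : Matrix n n ℂ}
    (h : ((1 : Matrix n n ℂ) - Nᴴ * N).PosSemidef) (i : n) : ‖N i i‖ ≤ 1 := by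
  have h0 := h.re_dotProduct_nonneg (Pi.single i 1)
  have key : dotProduct (star (Pi.single i 1)) (((1 : Matrix n n ℂ) - Nᴴ * N) *ᵥ (Pi.single i 1))
      = ((1 : Matrix n n ℂ) - Nᴴ * N) i i := by
    classical
    rw [Matrix.mulVec_single]
    rw [← Pi.single_star, star_one, single_dotProduct]
    simp
  rw [key] at h0
  have h0' : 0 ≤ (((1 : Matrix n n ℂ) - Nᴴ * N) i i).re := h0
  have h1 : ((Nᴴ * N) i i).re ≤ 1 := by
    have : (((1 : Matrix n n ℂ) - Nᴴ * N) i i).re = 1 - ((Nᴴ * N) i i).re := by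
      simp [Matrix.sub_apply, Matrix.one_apply]
    rw [this] at h0'; linarith
  have h2 : ((Nᴴ * N) i i).re = ∑ j, Complex.normSq (N j i) := by
    rw [Matrix.mul_apply]
    rw [Complex.re_sum]
    congr 1; ext j
    rw [Matrix.conjTranspose_apply, Complex.star_def, mul_comm, Complex.mul_conj]
    simp
  have h3 : Complex.normSq (N i i) ≤ ∑ j, Complex.normSq (N j i) :=
    Finset.single_le_sum (f := fun j => Complex.normSq (N j i)) (fun j _ => Complex.normSq_nonneg _) (Finset.mem_univ i)
  have h4 : ‖N i i‖ ^ 2 ≤ 1 := by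
    rw [Complex.sq_norm]
    linarith
  nlinarith [norm_nonneg (N i i)]

theorem auxTrace {n : Type*} [Fintype n] [DecidableEq n] {P : Matrix n n ℂ} (hP : P.PosSemidef) :
    ∃ r : ℝ, 0 ≤ r ∧ P.trace = (r : ℂ) ∧ (r = 0 → P = 0) := by
  obtain ⟨B, rfl⟩ := (by open scoped MatrixOrder Matrix.Norms.L2Operator in exact CStarAlgebra.nonneg_iff_eq_star_mul_self.mp hP.nonneg : ∃ B : Matrix n n ℂ, P = Bᴴ * B)
  refine ⟨∑ i, ∑ j, Complex.normSq (B j i), Finset.sum_nonneg fun i _ => Finset.sum_nonneg fun j _ => Complex.normSq_nonneg _, ?_, ?_⟩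
  · rw [Matrix.trace]
    push_cast
    congr 1; ext i
    rw [Matrix.diag_apply, Matrix.mul_apply]
    congr 1; ext j
    rw [Matrix.conjTranspose_apply, Complex.star_def, mul_comm, Complex.mul_conj]
  · intro hr
    have hB : B = 0 := by
      ext s t
      have h1 : ∀ i ∈ Finset.univ, (0:ℝ) ≤ ∑ j, Complex.normSq (B j i) :=
        fun i _ => Finset.sum_nonneg fun j _ => Complex.normSq_nonneg _
      have h2 := (Finset.sum_eq_zero_iff_of_nonneg h1).mp hr t (Finset.mem_univ t)
      have h3 := (Finset.sum_eq_zero_iff_of_nonneg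
        (fun j _ => Complex.normSq_nonneg (B j t))).mp h2 s (Finset.mem_univ s)
      simpa using Complex.normSq_eq_zero.mp h3
    rw [hB]; simp

/-- Let `φ, φ'` be states on `M_k(ℂ)` with density matrices
`ρ, ρ'`, and `L : A → M_k(ℂ)` a unital completely positive map from a unital
C*-algebra `A`.  Write `Ξ(φ) = φ ∘ L` (given here as the continuous functionals
`ψ, ψ'`).  If the supports of `φ` and `φ'` are not orthogonal (equivalently
`ρρ' ≠ 0`), then `‖Ξ(φ) − Ξ(φ')‖ < 2`. -/
theorem stmt17 (k : ℕ) (hk : 0 < k)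
    (A : Type*) [NormedRing A] [StarRing A] [CStarRing A]
    [NormedAlgebra ℂ A] [StarModule ℂ A] [CompleteSpace A]
    (L : A →ₗ[ℂ] Matrix (Fin k) (Fin k) ℂ)
    (hLunital : L 1 = 1)
    (hLcp : ∀ (m : ℕ) (a : Fin m → A) (x : Fin m → Matrix (Fin k) (Fin k) ℂ),
      (∑ i, ∑ j, (x i)ᴴ * L (star (a i) * a j) * x j).PosSemidef)
    (ρ ρ' : Matrix (Fin k) (Fin k) ℂ)
    (hρ : ρ.PosSemidef) (hρtr : ρ.trace = 1)
    (hρ' : ρ'.PosSemidef) (hρ'tr : ρ'.trace = 1)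
    (ψ ψ' : A →L[ℂ] ℂ)
    (hψ : ∀ a, ψ a = (ρ * L a).trace)
    (hψ' : ∀ a, ψ' a = (ρ' * L a).trace)
    (hsupp : ρ * ρ' ≠ 0) :
    ‖ψ - ψ'‖ < 2 := by
  classical
  -- A is nontrivial
  have hnt : Nontrivial A := by
    by_contra h
    rw [not_nontrivial_iff_subsingleton] at h
    have h1 : (1 : A) = 0 := Subsingleton.elim _ _
    have h2 : (1 : Matrix (Fin k) (Fin k) ℂ) = 0 := by rw [← hLunital, h1, map_zero]
    have h3 := congrFun (congrFun h2 ⟨0, hk⟩) ⟨0, hk⟩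
    simp [Matrix.one_apply] at h3
  -- spectral data of D = ρ - ρ'
  set D : Matrix (Fin k) (Fin k) ℂ := ρ - ρ' with hD_def
  have hD : D.IsHermitian := hρ.1.sub hρ'.1
  set V : Matrix (Fin k) (Fin k) ℂ := (hD.eigenvectorUnitary : Matrix (Fin k) (Fin k) ℂ)
    with hV_def
  set μ : Fin k → ℝ := hD.eigenvalues with hμ_def
  have hV1 : star V * V = 1 := Matrix.mem_unitaryGroup_iff'.mp hD.eigenvectorUnitary.2
  have hV2 : V * star V = 1 := Matrix.mem_unitaryGroup_iff.mp hD.eigenvectorUnitary.2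
  set dgμ : Matrix (Fin k) (Fin k) ℂ := Matrix.diagonal (RCLike.ofReal ∘ μ) with hdgμ_def
  have hspec : D = V * dgμ * star V := hD.spectral_theorem
  have trace_conj : ∀ X : Matrix (Fin k) (Fin k) ℂ, (V * X * star V).trace = X.trace := by
    intro X
    rw [Matrix.trace_mul_cycle, hV1, one_mul]
  have sandwich : ∀ X Y : Matrix (Fin k) (Fin k) ℂ,
      (V * X * star V) * (V * Y * star V) = V * (X * Y) * star V := by
    intro X Y
    calc (V * X * star V) * (V * Y * star V)
        = V * X * ((star V * V) * (Y * star V)) := by simp only [mul_assoc]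
      _ = V * (X * Y) * star V := by rw [hV1, one_mul]; simp only [← mul_assoc]
  -- the trace bound constant
  set c : ℝ := ∑ i, |μ i| with hc_def
  have hc0 : 0 ≤ c := Finset.sum_nonneg fun i _ => abs_nonneg _
  -- bound |trace (D * M)| ≤ c for contractions M
  have boundM : ∀ M : Matrix (Fin k) (Fin k) ℂ,
      ((1 : Matrix (Fin k) (Fin k) ℂ) - Mᴴ * M).PosSemidef → ‖(D * M).trace‖ ≤ c := by
    intro M hM
    set N : Matrix (Fin k) (Fin k) ℂ := star V * M * V with hN_def
    have hNps : ((1 : Matrix (Fin k) (Fin k) ℂ) - Nᴴ * N).PosSemidef := by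
      have key : (1 : Matrix (Fin k) (Fin k) ℂ) - Nᴴ * N
          = Vᴴ * ((1 - Mᴴ * M)) * V := by
        have hNH : Nᴴ = star V * Mᴴ * V := by
          rw [hN_def, Matrix.conjTranspose_mul, Matrix.conjTranspose_mul]
          rw [Matrix.star_eq_conjTranspose, Matrix.conjTranspose_conjTranspose]
          simp only [mul_assoc]
        rw [hNH, hN_def]
        rw [Matrix.star_eq_conjTranspose]
        calc (1 : Matrix (Fin k) (Fin k) ℂ) - Vᴴ * Mᴴ * V * (Vᴴ * M * V)
            = 1 - Vᴴ * Mᴴ * ((V * Vᴴ) * (M * V)) := by simp only [mul_assoc]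
          _ = Vᴴ * V - Vᴴ * (Mᴴ * M) * V := by
              rw [← Matrix.star_eq_conjTranspose, hV2, hV1, one_mul]
              simp only [mul_assoc]
          _ = Vᴴ * (1 - Mᴴ * M) * V := by
              rw [Matrix.mul_sub, Matrix.sub_mul, Matrix.mul_one]
      rw [key]
      exact hM.conjTranspose_mul_mul_same V
    have htr : (D * M).trace = ∑ i, (μ i : ℂ) * N i i := by
      calc (D * M).trace = ((V * dgμ * star V) * M).trace := by rw [← hspec]
        _ = ((V * dgμ) * (star V * M)).trace := by simp only [mul_assoc]
        _ = ((star V * M) * (V * dgμ)).trace := Matrix.trace_mul_comm _ _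
        _ = ((star V * M * V) * dgμ).trace := by simp only [mul_assoc]
        _ = (dgμ * N).trace := Matrix.trace_mul_comm _ _
        _ = ∑ i, (μ i : ℂ) * N i i := by
            rw [Matrix.trace]
            congr 1; ext i
            rw [Matrix.diag_apply, hdgμ_def, Matrix.diagonal_mul]
            rfl
    rw [htr]
    calc ‖∑ i, (μ i : ℂ) * N i i‖ ≤ ∑ i, ‖(μ i : ℂ) * N i i‖ := norm_sum_le _ _
      _ ≤ ∑ i, |μ i| := by
          apply Finset.sum_le_sum
          intro i _
          rw [norm_mul, Complex.norm_real, Real.norm_eq_abs]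
          exact mul_le_of_le_one_right (abs_nonneg _) (auxDiag hNps i)
      _ = c := rfl
  -- ‖ψ - ψ'‖ ≤ c
  have hnorm_le : ‖ψ - ψ'‖ ≤ c := by
    apply ContinuousLinearMap.opNorm_le_bound _ hc0
    intro a
    have happ : (ψ - ψ') a = (D * L a).trace := by
      rw [ContinuousLinearMap.sub_apply, hψ, hψ', hD_def, Matrix.sub_mul, Matrix.trace_sub]
    rw [happ]
    rcases eq_or_ne a 0 with rfl | ha
    · simp
    · have hna : (0:ℝ) < ‖a‖ := norm_pos_iff.mpr ha
      set u : A := ((‖a‖ : ℂ))⁻¹ • a with hu_def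
      have hu_norm : ‖u‖ ≤ 1 := by
        rw [hu_def, norm_smul, norm_inv, Complex.norm_real, Real.norm_eq_abs,
          abs_of_pos hna, inv_mul_cancel₀ (ne_of_gt hna)]
      have hau : a = (‖a‖ : ℂ) • u := by
        rw [hu_def, smul_smul, mul_inv_cancel₀ (by exact_mod_cast ne_of_gt hna), one_smul]
      have hLa : L a = (‖a‖ : ℂ) • L u := by
        rw [hu_def, map_smul, smul_smul, mul_inv_cancel₀ (by exact_mod_cast ne_of_gt hna),
          one_smul]
      have : (D * L a).trace = (‖a‖ : ℂ) * (D * L u).trace := by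
        rw [hLa, Matrix.mul_smul, Matrix.trace_smul, smul_eq_mul]
      rw [this, norm_mul, Complex.norm_real, Real.norm_eq_abs, abs_of_pos hna, mul_comm]
      exact mul_le_mul_of_nonneg_right (boundM (L u) (auxContract L hLunital hLcp u hu_norm))
        hna.le
  -- now show c < 2 using the support projection argument
  set χ : Fin k → ℝ := fun i => if 0 < μ i then 1 else 0 with hχ_def
  set dgχ : Matrix (Fin k) (Fin k) ℂ := Matrix.diagonal (fun i => (χ i : ℂ)) with hdgχ_def
  set e : Matrix (Fin k) (Fin k) ℂ := V * dgχ * star V with he_def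
  set f : Matrix (Fin k) (Fin k) ℂ := 1 - e with hf_def
  have hdgχH : dgχᴴ = dgχ := by
    rw [hdgχ_def, Matrix.diagonal_conjTranspose]
    ext i j
    rcases eq_or_ne i j with rfl | hij
    · simp [Matrix.diagonal_apply_eq, Complex.conj_ofReal]
    · simp [Matrix.diagonal_apply_ne _ hij]
  have heH : eᴴ = e := by
    rw [he_def, Matrix.conjTranspose_mul, Matrix.conjTranspose_mul, hdgχH,
      Matrix.star_eq_conjTranspose, Matrix.conjTranspose_conjTranspose]
    simp only [mul_assoc]
  have hfH : fᴴ = f := by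
    rw [hf_def, Matrix.conjTranspose_sub, Matrix.conjTranspose_one, heH]
  have hee : e * e = e := by
    rw [he_def, sandwich, hdgχ_def, Matrix.diagonal_mul_diagonal]
    have hχχ : (fun i => (χ i : ℂ) * (χ i : ℂ)) = fun i => (χ i : ℂ) := by
      funext i
      rw [hχ_def]
      by_cases h : 0 < μ i <;> simp [h]
    rw [hχχ]
  have hff : f * f = f := by
    rw [hf_def, Matrix.sub_mul, Matrix.mul_sub, Matrix.mul_sub, hee]
    simp only [one_mul, mul_one]
    abel
  -- T := positive part sum
  set T : ℝ := ∑ i, if 0 < μ i then μ i else 0 with hT_def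
  have hT0 : 0 ≤ T := Finset.sum_nonneg fun i _ => by
    by_cases h : 0 < μ i
    · rw [if_pos h]; exact h.le
    · rw [if_neg h]
  have hceq : c = 2 * T - ∑ i, μ i := by
    rw [hc_def, hT_def, Finset.mul_sum, ← Finset.sum_sub_distrib]
    congr 1; funext i
    rcases lt_or_ge 0 (μ i) with h | h
    · rw [if_pos h, abs_of_pos h]; ring
    · rw [if_neg (not_lt.mpr h), abs_of_nonpos h]; ring
  have hsumμ : ∑ i, μ i = 0 := by
    have h1 : D.trace = 0 := by
      rw [hD_def, Matrix.trace_sub, hρtr, hρ'tr, sub_self]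
    have h2 : D.trace = ((∑ i, μ i : ℝ) : ℂ) := by
      rw [hspec, trace_conj, hdgμ_def, Matrix.trace_diagonal]
      push_cast
      rfl
    rw [h1] at h2
    exact_mod_cast h2.symm
  have hc2T : c = 2 * T := by rw [hceq, hsumμ, sub_zero]
  -- trace (e * D) = T
  have h_eD : (e * D).trace = (T : ℂ) := by
    rw [he_def, hspec, sandwich, trace_conj, hdgχ_def, hdgμ_def, Matrix.diagonal_mul_diagonal,
      Matrix.trace_diagonal, hT_def]
    push_cast
    congr 1; funext i
    rw [hχ_def]
    by_cases h : 0 < μ i <;> simp [h]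
  -- psd pieces
  have hfρf : (f * ρ * f).PosSemidef := by
    have := hρ.conjTranspose_mul_mul_same f
    rwa [hfH] at this
  have heρ'e : (e * ρ' * e).PosSemidef := by
    have := hρ'.conjTranspose_mul_mul_same e
    rwa [heH] at this
  obtain ⟨r1, hr1, hr1eq, hr1zero⟩ := auxTrace hfρf
  obtain ⟨r2, hr2, hr2eq, hr2zero⟩ := auxTrace heρ'e
  -- trace identities
  have htr_fρ : (f * ρ).trace = (r1 : ℂ) := by
    rw [← hr1eq]
    calc (f * ρ).trace = ((f * f) * ρ).trace := by rw [hff]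
      _ = (f * ρ * f).trace := (Matrix.trace_mul_cycle f ρ f).symm
  have htr_eρ' : (e * ρ').trace = (r2 : ℂ) := by
    rw [← hr2eq]
    calc (e * ρ').trace = ((e * e) * ρ').trace := by rw [hee]
      _ = (e * ρ' * e).trace := (Matrix.trace_mul_cycle e ρ' e).symm
  have hT_eq : (T : ℂ) = 1 - r1 - r2 := by
    have h1 : e * D = e * ρ - e * ρ' := by rw [hD_def, Matrix.mul_sub]
    have h2 : (e * ρ).trace = 1 - (f * ρ).trace := by
      have : e * ρ = ρ - f * ρ := by rw [hf_def, Matrix.sub_mul, Matrix.one_mul]; abel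
      rw [this, Matrix.trace_sub, hρtr]
    rw [← h_eD, h1, Matrix.trace_sub, h2, htr_fρ, htr_eρ']
  have hT_real : T = 1 - r1 - r2 := by exact_mod_cast hT_eq
  -- strictness: r1 + r2 > 0
  have hpos : 0 < r1 + r2 := by
    rcases lt_or_eq_of_le (add_nonneg hr1 hr2) with h | h
    · exact h
    · exfalso
      have hr1z : r1 = 0 := by linarith
      have hr2z : r2 = 0 := by linarith
      have hfρf0 : f * ρ * f = 0 := hr1zero hr1z
      have heρ'e0 : e * ρ' * e = 0 := hr2zero hr2z
      -- ρ * f = 0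
      obtain ⟨B, hB⟩ := (by open scoped MatrixOrder Matrix.Norms.L2Operator in exact CStarAlgebra.nonneg_iff_eq_star_mul_self.mp hρ.nonneg : ∃ B : Matrix (Fin k) (Fin k) ℂ, ρ = Bᴴ * B)
      have hBf : (B * f)ᴴ * (B * f) = f * ρ * f := by
        rw [Matrix.conjTranspose_mul, hfH, hB]
        simp only [mul_assoc]
      have hBf0 : B * f = 0 := by
        rw [← Matrix.conjTranspose_mul_self_eq_zero (A := B * f), hBf, hfρf0]
      have hρf : ρ * f = 0 := by
        rw [hB, mul_assoc, hBf0, Matrix.mul_zero]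
      -- e * ρ' = 0
      obtain ⟨C, hC⟩ := (by open scoped MatrixOrder Matrix.Norms.L2Operator in exact CStarAlgebra.nonneg_iff_eq_star_mul_self.mp hρ'.nonneg : ∃ C : Matrix (Fin k) (Fin k) ℂ, ρ' = Cᴴ * C)
      have hCe : (C * e)ᴴ * (C * e) = e * ρ' * e := by
        rw [Matrix.conjTranspose_mul, heH, hC]
        simp only [mul_assoc]
      have hCe0 : C * e = 0 := by
        rw [← Matrix.conjTranspose_mul_self_eq_zero (A := C * e), hCe, heρ'e0]
      have hρ'e : ρ' * e = 0 := by
        rw [hC, mul_assoc, hCe0, Matrix.mul_zero]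
      have heρ' : e * ρ' = 0 := by
        have := congrArg Matrix.conjTranspose hρ'e
        rwa [Matrix.conjTranspose_mul, heH, hρ'.1, Matrix.conjTranspose_zero] at this
      apply hsupp
      have hef : e + f = 1 := by rw [hf_def, add_sub_cancel]
      calc ρ * ρ' = ρ * ((e + f) * ρ') := by rw [hef, one_mul]
        _ = ρ * (e * ρ') + (ρ * f) * ρ' := by
            rw [Matrix.add_mul, Matrix.mul_add, mul_assoc ρ f ρ']
        _ = 0 := by rw [heρ', hρf, Matrix.mul_zero, Matrix.zero_mul, add_zero]
  have hT1 : T < 1 := by rw [hT_real]; linarith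
  calc ‖ψ - ψ'‖ ≤ c := hnorm_le
    _ = 2 * T := hc2T
    _ < 2 := by linarith
end
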